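/- arXiv:1404.5465 — 6 statements merged into one kernel-verified Lean document; each statement's English description precedes it below -/
import Mathlib

section
/- (Theorem 1(i)) In the single-area nested-error model with log transformation, for every out-of-sample unit i ∈ {n_d+1,…,N_d}, the conditional expectation of exp(y_{di}) given the σ-algebra generated by the sample responses y_{d1},…,y_{dn_d} equals, almost surely, exp(ỹ_{di} + α_d), where ỹ_{di} = x_{di}'β + γ_d(ȳ_{ds} − x̄_{ds}'β), γ_d = σu²/(σu² + σe²/n_d), α_d = (1/2)(σu²(1−γ_d) + σe²), ȳ_{ds} = n_d^{-1} Σ_{i=1}^{n_d} y_{di}, and x̄_{ds} = n_d^{-1} Σ_{i=1}^{n_d} x_{di}. -/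
open MeasureTheory ProbabilityTheory Matrix

section Aux

open Real

private lemma tilt_meas' (t c : ℝ) :
    Measurable (fun x : ℝ => ENNReal.ofReal (Real.exp (t * x - c))) :=
  ((measurable_id.const_mul t).sub measurable_const).exp.ennreal_ofReal

private lemma tilt_gaussian (v : NNReal) (t : ℝ) :
    (gaussianReal 0 v).withDensity
      (fun x => ENNReal.ofReal (Real.exp (t * x - t ^ 2 * v / 2)))
      = gaussianReal (t * v) v := by
  by_cases hv : v = 0
  · subst hv
    simp only [gaussianReal_zero_var, NNReal.coe_zero, mul_zero]
    ext s hs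
    classical
    rw [withDensity_apply _ hs, setLIntegral_dirac' (tilt_meas' t _) hs,
      Measure.dirac_apply' _ hs]
    by_cases h0 : (0:ℝ) ∈ s <;> simp [h0]
  · rw [gaussianReal_of_var_ne_zero _ hv, gaussianReal_of_var_ne_zero _ hv,
      ← withDensity_mul _ (measurable_gaussianPDF _ _) (tilt_meas' t _)]
    congr 1
    ext x
    simp only [Pi.mul_apply, gaussianPDF, ← ENNReal.ofReal_mul (gaussianPDFReal_nonneg _ _ _)]
    congr 1
    simp only [gaussianPDFReal, sub_zero, mul_assoc, ← Real.exp_add]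
    congr 1
    have hv' : (v:ℝ) ≠ 0 := by exact_mod_cast hv
    field_simp
    ring

private lemma lintegral_tilt (v : NNReal) (t : ℝ) :
    ∫⁻ x, ENNReal.ofReal (Real.exp (t * x - t ^ 2 * v / 2)) ∂(gaussianReal 0 v) = 1 := by
  have h := congrArg (fun m : Measure ℝ => m Set.univ) (tilt_gaussian v t)
  simpa [withDensity_apply _ MeasurableSet.univ] using h

private lemma integrable_exp_gaussian (v : NNReal) (t : ℝ) :
    Integrable (fun x => Real.exp (t * x)) (gaussianReal 0 v) := by
  refine ⟨(measurable_id.const_mul t).exp.aestronglyMeasurable, ?_⟩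
  rw [hasFiniteIntegral_iff_ofReal (Filter.Eventually.of_forall fun x => (exp_pos _).le)]
  have : (fun x : ℝ => ENNReal.ofReal (Real.exp (t * x)))
      = fun x => ENNReal.ofReal (Real.exp (t ^ 2 * v / 2))
          * ENNReal.ofReal (Real.exp (t * x - t ^ 2 * v / 2)) := by
    ext x
    rw [← ENNReal.ofReal_mul (exp_pos _).le, ← Real.exp_add]
    ring_nf
  rw [this, lintegral_const_mul _ (tilt_meas' t _), lintegral_tilt]
  simp [ENNReal.ofReal_lt_top]

private lemma integrable_exp_tilt (v : NNReal) (t c : ℝ) :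
    Integrable (fun x => Real.exp (t * x - c)) (gaussianReal 0 v) := by
  have h : (fun x : ℝ => Real.exp (t * x - c)) = fun x => Real.exp (-c) * Real.exp (t * x) := by
    ext x; rw [← Real.exp_add]; ring_nf
  rw [h]
  exact (integrable_exp_gaussian v t).const_mul _

private lemma integrable_pi_prod {ι : Type} [Fintype ι] (μ : ι → Measure ℝ)
    [∀ i, SigmaFinite (μ i)] (g : ι → ℝ → ℝ)
    (hgi : ∀ i, Integrable (g i) (μ i)) :
    Integrable (fun a : ι → ℝ => ∏ i, g i (a i)) (Measure.pi μ) :=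
  MeasureTheory.Integrable.fintype_prod_dep (E := fun _ => ℝ) (f := g) (μ := μ) hgi

private lemma integral_pi_prod {ι : Type} [Fintype ι] (μ : ι → Measure ℝ)
    [∀ i, SigmaFinite (μ i)] (g : ι → ℝ → ℝ) :
    ∫ a : ι → ℝ, ∏ i, g i (a i) ∂(Measure.pi μ) = ∏ i, ∫ x, g i x ∂(μ i) :=
  MeasureTheory.integral_fintype_prod_eq_prod (E := fun _ => ℝ) g (μ := μ)

private lemma pi_withDensity {ι : Type} [Fintype ι] (μ : ι → Measure ℝ)
    [∀ i, IsProbabilityMeasure (μ i)] (d : ι → ℝ → ℝ)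
    (hd0 : ∀ i x, 0 ≤ d i x)
    (hdi : ∀ i, Integrable (d i) (μ i)) :
    (Measure.pi μ).withDensity (fun a => ENNReal.ofReal (∏ i, d i (a i)))
      = Measure.pi (fun i => (μ i).withDensity (fun x => ENNReal.ofReal (d i x))) := by
  haveI : ∀ i, IsFiniteMeasure ((μ i).withDensity fun x => ENNReal.ofReal (d i x)) :=
    fun i => isFiniteMeasure_withDensity_ofReal (hdi i).2
  refine (Measure.pi_eq fun s hs => ?_).symm
  rw [withDensity_apply _ (MeasurableSet.univ_pi hs),
    ← lintegral_indicator (MeasurableSet.univ_pi hs)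
      (fun a : ι → ℝ => ENNReal.ofReal (∏ i, d i (a i)))]
  have key : (Set.univ.pi s).indicator (fun a : ι → ℝ => ENNReal.ofReal (∏ i, d i (a i)))
      = fun a => ENNReal.ofReal (∏ i, (s i).indicator (d i) (a i)) := by
    ext a
    by_cases ha : a ∈ Set.univ.pi s
    · rw [Set.indicator_of_mem ha]
      congr 1
      exact Finset.prod_congr rfl fun i _ =>
        (Set.indicator_of_mem (ha i (Set.mem_univ i)) _).symm
    · rw [Set.indicator_of_notMem ha]
      obtain ⟨i, hi⟩ : ∃ i, a i ∉ s i := by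
        by_contra h
        push_neg at h
        exact ha fun i _ => h i
      rw [Finset.prod_eq_zero (Finset.mem_univ i) (Set.indicator_of_notMem hi _)]
      simp
  have hint : Integrable (fun a : ι → ℝ => ∏ i, (s i).indicator (d i) (a i)) (Measure.pi μ) :=
    integrable_pi_prod μ _ (fun i => (hdi i).indicator (hs i))
  have hpos : (0 : (ι → ℝ) → ℝ) ≤ᵐ[Measure.pi μ]
      fun a : ι → ℝ => ∏ i, (s i).indicator (d i) (a i) :=
    Filter.Eventually.of_forall fun a => Finset.prod_nonneg fun i _ =>
      Set.indicator_nonneg (fun x _ => hd0 i x) _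
  rw [key, ← ofReal_integral_eq_lintegral_ofReal hint hpos, integral_pi_prod μ,
    ENNReal.ofReal_prod_of_nonneg fun i _ =>
      integral_nonneg (Set.indicator_nonneg fun x _ => hd0 i x)]
  refine Finset.prod_congr rfl fun i _ => ?_
  rw [withDensity_apply _ (hs i),
    ofReal_integral_eq_lintegral_ofReal ((hdi i).indicator (hs i))
      (Filter.Eventually.of_forall (Set.indicator_nonneg fun x _ => hd0 i x)),
    ← lintegral_indicator (hs i) (fun x => ENNReal.ofReal (d i x))]
  congr 1
  ext x
  by_cases hx : x ∈ s i
  · simp [Set.indicator_of_mem hx]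
  · simp [Set.indicator_of_notMem hx]

private lemma tilt_pi {ι : Type} [Fintype ι] (v : ι → NNReal) (t : ι → ℝ) :
    (Measure.pi fun i => gaussianReal 0 (v i)).withDensity
      (fun a => ENNReal.ofReal (Real.exp (∑ i, (t i * a i - (t i) ^ 2 * (v i) / 2))))
      = (Measure.pi fun i => gaussianReal 0 (v i)).map
          (fun (a : ι → ℝ) i => a i + t i * v i) := by
  have hmp : ∀ i, MeasurePreserving (fun x : ℝ => x + t i * v i)
      (gaussianReal 0 (v i)) (gaussianReal (t i * v i) (v i)) := fun i =>
    ⟨measurable_add_const _, by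
      have := gaussianReal_map_add_const (μ := 0) (v := v i) (t i * v i)
      rwa [zero_add] at this⟩
  rw [(measurePreserving_pi _ _ hmp).map_eq]
  have hd : (fun a : ι → ℝ => ENNReal.ofReal (Real.exp (∑ i, (t i * a i - t i ^ 2 * (v i) / 2))))
      = fun a => ENNReal.ofReal (∏ i, Real.exp (t i * a i - t i ^ 2 * (v i) / 2)) := by
    ext a
    rw [Real.exp_sum]
  rw [hd, pi_withDensity (fun i => gaussianReal 0 (v i))
      (fun i x => Real.exp (t i * x - t i ^ 2 * (v i) / 2))
      (fun i x => (exp_pos _).le) (fun i => integrable_exp_tilt _ _ _)]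
  exact congrArg _ (funext fun i => tilt_gaussian (v i) (t i))

private lemma integrable_exp_sum_pi {ι : Type} [Fintype ι] (v : ι → NNReal) (t : ι → ℝ) :
    Integrable (fun a : ι → ℝ => Real.exp (∑ o, t o * a o))
      (Measure.pi fun o => gaussianReal 0 (v o)) := by
  have h : (fun a : ι → ℝ => Real.exp (∑ o, t o * a o))
      = fun a => ∏ o, Real.exp (t o * a o) := funext fun a => Real.exp_sum _ _
  rw [h]
  exact integrable_pi_prod _ _ (fun o => integrable_exp_gaussian _ _)

private lemma setIntegral_exp_tilt_pi {ι : Type} [Fintype ι] (v : ι → NNReal) (t : ι → ℝ)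
    {A : Set (ι → ℝ)} (hA : MeasurableSet A) :
    ∫ a in A, Real.exp (∑ o, t o * a o) ∂(Measure.pi fun o => gaussianReal 0 (v o))
      = Real.exp (∑ o, t o ^ 2 * (v o) / 2)
        * ((Measure.pi fun o => gaussianReal 0 (v o))
            ((fun (a : ι → ℝ) o => a o + t o * v o) ⁻¹' A)).toReal := by
  set μ := Measure.pi fun o => gaussianReal 0 (v o) with hμ
  have hsm : Measurable (fun a : ι → ℝ => ∑ o, (t o * a o - t o ^ 2 * (v o) / 2)) :=
    Finset.measurable_sum _ fun o _ =>
      ((measurable_pi_apply o).const_mul _).sub measurable_const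
  have h1 : ∀ a : ι → ℝ, Real.exp (∑ o, t o * a o)
      = Real.exp (∑ o, t o ^ 2 * (v o) / 2)
        * Real.exp (∑ o, (t o * a o - t o ^ 2 * (v o) / 2)) := by
    intro a
    rw [← Real.exp_add, Finset.sum_sub_distrib]
    ring_nf
  calc ∫ a in A, Real.exp (∑ o, t o * a o) ∂μ
      = ∫ a in A, Real.exp (∑ o, t o ^ 2 * (v o) / 2)
          * Real.exp (∑ o, (t o * a o - t o ^ 2 * (v o) / 2)) ∂μ := by
        exact integral_congr_ae (Filter.Eventually.of_forall fun a => h1 a)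
    _ = Real.exp (∑ o, t o ^ 2 * (v o) / 2)
          * ∫ a in A, Real.exp (∑ o, (t o * a o - t o ^ 2 * (v o) / 2)) ∂μ :=
        integral_const_mul _ _
    _ = Real.exp (∑ o, t o ^ 2 * (v o) / 2)
          * ((μ.map (fun (a : ι → ℝ) o => a o + t o * v o)) A).toReal := by
        congr 1
        rw [integral_eq_lintegral_of_nonneg_ae
            (Filter.Eventually.of_forall fun a => (Real.exp_pos _).le)
            hsm.exp.aestronglyMeasurable, ← tilt_pi v t,
          ← withDensity_apply _ hA]
    _ = Real.exp (∑ o, t o ^ 2 * (v o) / 2)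
          * (μ ((fun (a : ι → ℝ) o => a o + t o * v o) ⁻¹' A)).toReal := by
        rw [Measure.map_apply
          (measurable_pi_lambda _ fun o => (measurable_pi_apply o).add_const _) hA]

private lemma iIndepFun_map_pi {Ω : Type} [MeasurableSpace Ω] (P : Measure Ω)
    [IsProbabilityMeasure P]
    {ι : Type} [Fintype ι] (f : ι → Ω → ℝ) (hfm : ∀ i, Measurable (f i))
    (hind : iIndepFun f P) :
    P.map (fun ω i => f i ω) = Measure.pi (fun i => P.map (f i)) := by
  haveI : ∀ i, IsProbabilityMeasure (P.map (f i)) :=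
    fun i => Measure.isProbabilityMeasure_map (hfm i).aemeasurable
  refine (Measure.pi_eq fun s hs => ?_).symm
  rw [Measure.map_apply (measurable_pi_lambda _ hfm) (MeasurableSet.univ_pi hs)]
  have hpre : (fun ω i => f i ω) ⁻¹' (Set.univ.pi s) = ⋂ i ∈ Finset.univ, f i ⁻¹' s i := by
    ext ω
    simp [Set.mem_pi]
  rw [hpre, hind.measure_inter_preimage_eq_mul Finset.univ (fun i _ => hs i)]
  exact Finset.prod_congr rfl fun i _ => (Measure.map_apply (hfm i) (hs i)).symm

private lemma sum_ite_lt {nd Nd : ℕ} (hNd : nd ≤ Nd) (g : Fin Nd → ℝ) :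
    ∑ j : Fin Nd, (if (j : ℕ) < nd then g j else 0)
      = ∑ k : Fin nd, g (Fin.castLE hNd k) := by
  classical
  let g' : ℕ → ℝ := fun m => if h : m < Nd then g ⟨m, h⟩ else 0
  let f : ℕ → ℝ := fun m => if m < nd then g' m else 0
  have h1 : ∑ j : Fin Nd, (if (j : ℕ) < nd then g j else 0) = ∑ m ∈ Finset.range Nd, f m := by
    rw [← Fin.sum_univ_eq_sum_range]
    refine Finset.sum_congr rfl fun j _ => ?_
    simp only [f, g', j.isLt, dif_pos, Fin.eta]
  have h2 : ∑ m ∈ Finset.range Nd, f m = ∑ m ∈ Finset.range nd, f m := by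
    refine (Finset.sum_subset (Finset.range_subset_range.mpr hNd) fun m _ hm => ?_).symm
    simp only [Finset.mem_range, not_lt] at hm
    simp [f, not_lt.mpr hm]
  have h3 : ∑ m ∈ Finset.range nd, f m = ∑ k : Fin nd, g (Fin.castLE hNd k) := by
    rw [← Fin.sum_univ_eq_sum_range]
    refine Finset.sum_congr rfl fun k _ => ?_
    have hk : (k : ℕ) < nd := k.isLt
    have hk' : (k : ℕ) < Nd := lt_of_lt_of_le hk hNd
    simp only [f, g', hk, if_pos, hk', dif_pos]
    rfl
  rw [h1, h2, h3]

end Aux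

/-- Theorem 1(i): in the single-area nested-error model with log transformation, the best
predictor of `w_{di} = exp(y_{di})` for an out-of-sample unit `i`, i.e. the conditional
expectation of `exp(y_{di})` given the sample responses, equals `exp(ỹ_{di} + α_d)` a.s. -/
theorem best_predictor_exp_y
    {Ω : Type} [MeasurableSpace Ω] (P : Measure Ω) [IsProbabilityMeasure P]
    (p nd Nd : ℕ) (hnd : 1 ≤ nd) (hNd : nd < Nd)
    (σu2 σe2 : ℝ) (hσu : 0 ≤ σu2) (hσe : 0 < σe2)
    (x : Fin Nd → Fin p → ℝ) (β : Fin p → ℝ)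
    (u : Ω → ℝ) (e : Fin Nd → Ω → ℝ)
    (hum : Measurable u) (hem : ∀ i, Measurable (e i))
    (hu : P.map u = gaussianReal 0 σu2.toNNReal)
    (he : ∀ i, P.map (e i) = gaussianReal 0 σe2.toNNReal)
    (hind : iIndepFun
      (fun o : Option (Fin Nd) => o.elim u e) P)
    (y : Fin Nd → Ω → ℝ) (hy : ∀ i ω, y i ω = x i ⬝ᵥ β + u ω + e i ω)
    (γd αd : ℝ)
    (hγ : γd = σu2 / (σu2 + σe2 / nd))
    (hα : αd = (1 / 2) * (σu2 * (1 - γd) + σe2))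
    (i : Fin Nd) (hi : nd ≤ (i : ℕ)) :
    P[(fun ω => Real.exp (y i ω)) |
        MeasurableSpace.comap
          (fun ω => fun k : Fin nd => y (Fin.castLE hNd.le k) ω) inferInstance]
      =ᵐ[P]
    fun ω => Real.exp
      ((x i ⬝ᵥ β
          + γd * (((nd : ℝ)⁻¹ * ∑ k : Fin nd, y (Fin.castLE hNd.le k) ω)
              - ((nd : ℝ)⁻¹ • ∑ k : Fin nd, x (Fin.castLE hNd.le k)) ⬝ᵥ β))
        + αd) := by
  classical
  have hndR : ((nd : ℝ)) ≠ 0 := Nat.cast_ne_zero.mpr (by omega)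
  have hndpos : (0:ℝ) < (nd:ℝ) := Nat.cast_pos.mpr (by omega)
  have hD : (0:ℝ) < σu2 + σe2 / nd :=
    add_pos_of_nonneg_of_pos hσu (div_pos hσe hndpos)
  have key1 : γd * (σu2 + σe2 / (nd:ℝ)) = σu2 := by
    rw [hγ]; exact div_mul_cancel₀ _ hD.ne'
  have key1' : γd * σu2 + γd / (nd:ℝ) * σe2 = σu2 := by
    linear_combination key1
  set V : Option (Fin Nd) → NNReal :=
    fun o => o.elim σu2.toNNReal (fun _ => σe2.toNNReal) with hV
  have hVnone : ((V none : ℝ)) = σu2 := Real.coe_toNNReal _ hσu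
  have hVsome : ∀ j, ((V (some j) : ℝ)) = σe2 := fun _ => Real.coe_toNNReal _ hσe.le
  set μpi : Measure (Option (Fin Nd) → ℝ) := Measure.pi (fun o => gaussianReal 0 (V o))
    with hμpi
  set T : Ω → Option (Fin Nd) → ℝ := fun ω o => o.elim u e ω with hTdef
  have hfm : ∀ o : Option (Fin Nd), Measurable (o.elim u e) := fun o => by
    cases o with
    | none => exact hum
    | some j => exact hem j
  have hTm : Measurable T := measurable_pi_lambda _ hfm
  have hT : P.map T = μpi := by
    have h1 := iIndepFun_map_pi P (fun o : Option (Fin Nd) => o.elim u e) hfm hind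
    have h2 : (fun o : Option (Fin Nd) => P.map (o.elim u e))
        = fun o => gaussianReal 0 (V o) := by
      funext o
      cases o with
      | none => simpa [hV] using hu
      | some j => simpa [hV] using he j
    rw [hμpi, ← h2, ← h1]
  have hym : ∀ j, Measurable (y j) := fun j => by
    have hyj : y j = fun ω => x j ⬝ᵥ β + u ω + e j ω := funext fun ω => hy j ω
    rw [hyj]
    exact (measurable_const.add hum).add (hem j)
  set Y : Ω → Fin nd → ℝ := fun ω => fun k : Fin nd => y (Fin.castLE hNd.le k) ω with hYdef
  have hYm : Measurable Y := measurable_pi_lambda _ fun k => hym _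
  set Yh : (Option (Fin Nd) → ℝ) → Fin nd → ℝ :=
    fun a k => x (Fin.castLE hNd.le k) ⬝ᵥ β + a none + a (some (Fin.castLE hNd.le k))
    with hYhdef
  have hYhm : Measurable Yh := measurable_pi_lambda _ fun k =>
    (measurable_const.add (measurable_pi_apply none)).add (measurable_pi_apply _)
  have hYcomp : Y = Yh ∘ T := by
    funext ω
    funext k
    simp only [hYdef, hYhdef, Function.comp_apply, hTdef]
    rw [hy]
    rfl
  set tL : Option (Fin Nd) → ℝ := fun o => o.elim 1 (fun j => if j = i then 1 else 0)
    with htL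
  set tR : Option (Fin Nd) → ℝ :=
    fun o => o.elim γd (fun j => if (j:ℕ) < nd then γd / nd else 0) with htR
  have hsumL : ∀ a : Option (Fin Nd) → ℝ, ∑ o, tL o * a o = a none + a (some i) := by
    intro a
    rw [Fintype.sum_option]
    simp only [htL, Option.elim, one_mul]
    congr 1
    rw [Finset.sum_congr rfl (fun (j : Fin Nd) (_ : j ∈ Finset.univ) =>
      (by split_ifs with h <;> simp [h] :
        (if j = i then (1:ℝ) else 0) * a (some j) = if j = i then a (some j) else 0))]
    simp
  have hsumR : ∀ a : Option (Fin Nd) → ℝ, ∑ o, tR o * a o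
      = γd * a none + γd / nd * ∑ k : Fin nd, a (some (Fin.castLE hNd.le k)) := by
    intro a
    rw [Fintype.sum_option]
    simp only [htR, Option.elim]
    congr 1
    rw [Finset.sum_congr rfl (fun (j : Fin Nd) (_ : j ∈ Finset.univ) =>
      (by split_ifs <;> ring :
        (if (j:ℕ) < nd then γd / (nd:ℝ) else 0) * a (some j)
          = if (j:ℕ) < nd then γd / (nd:ℝ) * a (some j) else 0)),
      sum_ite_lt hNd.le (fun j => γd / (nd:ℝ) * a (some j)), Finset.mul_sum]
  have hCL : ∑ o, tL o ^ 2 * (V o : ℝ) / 2 = σu2 / 2 + σe2 / 2 := by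
    rw [Fintype.sum_option]
    simp only [htL, Option.elim, one_pow, hVnone, hVsome, one_mul]
    congr 1
    rw [Finset.sum_congr rfl (fun (j : Fin Nd) (_ : j ∈ Finset.univ) =>
      (by split_ifs <;> ring :
        (if j = i then (1:ℝ) else 0) ^ 2 * σe2 / 2 = if j = i then σe2 / 2 else 0))]
    simp
  have hCR : ∑ o, tR o ^ 2 * (V o : ℝ) / 2
      = γd ^ 2 * σu2 / 2 + (nd : ℝ) * ((γd / nd) ^ 2 * σe2 / 2) := by
    rw [Fintype.sum_option]
    simp only [htR, Option.elim, hVnone, hVsome]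
    congr 1
    rw [Finset.sum_congr rfl (fun (j : Fin Nd) (_ : j ∈ Finset.univ) =>
      (by split_ifs <;> ring :
        (if (j:ℕ) < nd then γd / (nd:ℝ) else 0) ^ 2 * σe2 / 2
          = if (j:ℕ) < nd then (γd / (nd:ℝ)) ^ 2 * σe2 / 2 else 0)),
      sum_ite_lt hNd.le (fun _ => (γd / (nd:ℝ)) ^ 2 * σe2 / 2), Finset.sum_const,
      Finset.card_univ, Fintype.card_fin, nsmul_eq_mul]
  have hCeq : x i ⬝ᵥ β + αd
        + (γd ^ 2 * σu2 / 2 + (nd : ℝ) * ((γd / nd) ^ 2 * σe2 / 2))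
      = x i ⬝ᵥ β + (σu2 / 2 + σe2 / 2) := by
    have e2 : (nd:ℝ) * ((γd / nd) ^ 2 * σe2 / 2) = γd * (γd / (nd:ℝ) * σe2) / 2 := by
      field_simp
    rw [e2, hα]
    linear_combination (γd / 2) * key1'
  -- integrand representations
  have hFLm : Measurable (fun a : Option (Fin Nd) → ℝ => Real.exp (∑ o, tL o * a o)) :=
    (Finset.measurable_sum _ fun o _ => (measurable_pi_apply o).const_mul _).exp
  have hFRm : Measurable (fun a : Option (Fin Nd) → ℝ => Real.exp (∑ o, tR o * a o)) :=
    (Finset.measurable_sum _ fun o _ => (measurable_pi_apply o).const_mul _).exp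
  have hfT : (fun ω => Real.exp (y i ω))
      = fun ω => Real.exp (x i ⬝ᵥ β) * Real.exp (∑ o, tL o * T ω o) := by
    funext ω
    rw [hsumL (T ω), ← Real.exp_add, hy]
    show Real.exp (x i ⬝ᵥ β + u ω + e i ω)
      = Real.exp (x i ⬝ᵥ β + (none.elim u e ω + (some i).elim u e ω))
    congr 1
    show x i ⬝ᵥ β + u ω + e i ω = x i ⬝ᵥ β + (u ω + e i ω)
    ring
  have hxb : ((nd : ℝ)⁻¹ • ∑ k : Fin nd, x (Fin.castLE hNd.le k)) ⬝ᵥ β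
      = (nd:ℝ)⁻¹ * ∑ k : Fin nd, x (Fin.castLE hNd.le k) ⬝ᵥ β := by
    rw [smul_dotProduct, smul_eq_mul]
    congr 1
    simp only [dotProduct, Finset.sum_apply, Finset.sum_mul]
    exact Finset.sum_comm
  have hgT : (fun ω => Real.exp
      ((x i ⬝ᵥ β
          + γd * (((nd : ℝ)⁻¹ * ∑ k : Fin nd, y (Fin.castLE hNd.le k) ω)
              - ((nd : ℝ)⁻¹ • ∑ k : Fin nd, x (Fin.castLE hNd.le k)) ⬝ᵥ β))
        + αd))
      = fun ω => Real.exp (x i ⬝ᵥ β + αd) * Real.exp (∑ o, tR o * T ω o) := by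
    funext ω
    rw [hsumR (T ω), ← Real.exp_add]
    congr 1
    have hysum : ∑ k : Fin nd, y (Fin.castLE hNd.le k) ω
        = (∑ k : Fin nd, x (Fin.castLE hNd.le k) ⬝ᵥ β) + (nd:ℝ) * u ω
          + ∑ k : Fin nd, e (Fin.castLE hNd.le k) ω := by
      rw [Finset.sum_congr rfl fun (k : Fin nd) (_ : k ∈ Finset.univ) => hy _ ω,
        Finset.sum_add_distrib, Finset.sum_add_distrib, Finset.sum_const,
        Finset.card_univ, Fintype.card_fin, nsmul_eq_mul]
    rw [hxb, hysum]
    show x i ⬝ᵥ β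
          + γd * (((nd : ℝ)⁻¹ * (_ + (nd:ℝ) * u ω + ∑ k : Fin nd, e (Fin.castLE hNd.le k) ω))
              - (nd:ℝ)⁻¹ * _)
        + αd
      = x i ⬝ᵥ β + αd + (γd * u ω + γd / (nd:ℝ)
          * ∑ k : Fin nd, e (Fin.castLE hNd.le k) ω)
    field_simp
    ring
  -- integrability
  have hintL : Integrable (fun ω => Real.exp (y i ω)) P := by
    rw [hfT]
    have h1 : Integrable (fun a : Option (Fin Nd) → ℝ => Real.exp (∑ o, tL o * a o))
        (P.map T) := by
      rw [hT, hμpi]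
      exact integrable_exp_sum_pi V tL
    have h2 := (integrable_map_measure hFLm.aestronglyMeasurable hTm.aemeasurable).mp h1
    simpa [Function.comp] using h2.const_mul (Real.exp (x i ⬝ᵥ β))
  have hintR : Integrable (fun ω => Real.exp
      ((x i ⬝ᵥ β
          + γd * (((nd : ℝ)⁻¹ * ∑ k : Fin nd, y (Fin.castLE hNd.le k) ω)
              - ((nd : ℝ)⁻¹ • ∑ k : Fin nd, x (Fin.castLE hNd.le k)) ⬝ᵥ β))
        + αd)) P := by
    rw [hgT]
    have h1 : Integrable (fun a : Option (Fin Nd) → ℝ => Real.exp (∑ o, tR o * a o))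
        (P.map T) := by
      rw [hT, hμpi]
      exact integrable_exp_sum_pi V tR
    have h2 := (integrable_map_measure hFRm.aestronglyMeasurable hTm.aemeasurable).mp h1
    simpa [Function.comp] using h2.const_mul (Real.exp (x i ⬝ᵥ β + αd))
  -- the shifted maps agree after composing with Yh
  have hki : ∀ k : Fin nd, (Fin.castLE hNd.le k) ≠ i := by
    intro k hk
    have h1 : ((Fin.castLE hNd.le k : Fin Nd) : ℕ) = (k : ℕ) := rfl
    have h2 := k.isLt
    rw [← hk, h1] at hi
    omega
  have hYhshift : (Yh ∘ fun (a : Option (Fin Nd) → ℝ) o => a o + tR o * (V o : ℝ))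
      = (Yh ∘ fun (a : Option (Fin Nd) → ℝ) o => a o + tL o * (V o : ℝ)) := by
    funext a k
    simp only [Function.comp_apply, hYhdef, htL, htR, Option.elim, hVnone, hVsome,
      if_neg (hki k), if_pos (show ((Fin.castLE hNd.le k : Fin Nd) : ℕ) < nd from k.isLt)]
    linear_combination key1'
  -- conclude via the characterization of the conditional expectation
  refine (ae_eq_condExp_of_forall_setIntegral_eq hYm.comap_le hintL
    (fun s _ _ => hintR.integrableOn) ?_ ?_).symm
  · intro s hs _
    obtain ⟨B, hB, rfl⟩ := hs
    have hpre : Y ⁻¹' B = T ⁻¹' (Yh ⁻¹' B) := by rw [hYcomp, Set.preimage_comp]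
    calc ∫ ω in Y ⁻¹' B, Real.exp
          ((x i ⬝ᵥ β
              + γd * (((nd : ℝ)⁻¹ * ∑ k : Fin nd, y (Fin.castLE hNd.le k) ω)
                  - ((nd : ℝ)⁻¹ • ∑ k : Fin nd, x (Fin.castLE hNd.le k)) ⬝ᵥ β))
            + αd) ∂P
        = ∫ ω in Y ⁻¹' B, Real.exp (x i ⬝ᵥ β + αd)
            * Real.exp (∑ o, tR o * T ω o) ∂P := by rw [hgT]
      _ = Real.exp (x i ⬝ᵥ β + αd)
            * ∫ ω in Y ⁻¹' B, Real.exp (∑ o, tR o * T ω o) ∂P := integral_const_mul _ _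
      _ = Real.exp (x i ⬝ᵥ β + αd)
            * ∫ a in Yh ⁻¹' B, Real.exp (∑ o, tR o * a o) ∂μpi := by
          congr 1
          rw [hpre, ← hT]
          exact (setIntegral_map (hYhm hB) hFRm.aestronglyMeasurable
            hTm.aemeasurable).symm
      _ = Real.exp (x i ⬝ᵥ β + αd) * (Real.exp (∑ o, tR o ^ 2 * (V o : ℝ) / 2)
            * (μpi ((fun (a : Option (Fin Nd) → ℝ) o => a o + tR o * (V o : ℝ)) ⁻¹'
                (Yh ⁻¹' B))).toReal) := by
          rw [hμpi]
          exact congrArg _ (setIntegral_exp_tilt_pi V tR (hYhm hB))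
      _ = Real.exp (x i ⬝ᵥ β) * (Real.exp (∑ o, tL o ^ 2 * (V o : ℝ) / 2)
            * (μpi ((fun (a : Option (Fin Nd) → ℝ) o => a o + tL o * (V o : ℝ)) ⁻¹'
                (Yh ⁻¹' B))).toReal) := by
          rw [hCL, hCR, ← Set.preimage_comp, ← Set.preimage_comp, hYhshift,
            ← mul_assoc, ← mul_assoc, ← Real.exp_add, ← Real.exp_add, hCeq]
      _ = Real.exp (x i ⬝ᵥ β)
            * ∫ a in Yh ⁻¹' B, Real.exp (∑ o, tL o * a o) ∂μpi := by
          rw [hμpi]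
          exact (congrArg _ (setIntegral_exp_tilt_pi V tL (hYhm hB))).symm
      _ = Real.exp (x i ⬝ᵥ β)
            * ∫ ω in Y ⁻¹' B, Real.exp (∑ o, tL o * T ω o) ∂P := by
          congr 1
          rw [hpre, ← hT]
          exact setIntegral_map (hYhm hB) hFLm.aestronglyMeasurable hTm.aemeasurable
      _ = ∫ ω in Y ⁻¹' B, Real.exp (x i ⬝ᵥ β)
            * Real.exp (∑ o, tL o * T ω o) ∂P := (integral_const_mul _ _).symm
      _ = ∫ ω in Y ⁻¹' B, Real.exp (y i ω) ∂P := by rw [← hfT]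
  · -- a.e. strong measurability with respect to the comap σ-algebra
    have hsum : Measurable fun z : Fin nd → ℝ => ∑ k, z k :=
      Finset.measurable_sum _ fun k _ => measurable_pi_apply k
    have hGm : Measurable fun z : Fin nd → ℝ => Real.exp
        ((x i ⬝ᵥ β
            + γd * (((nd : ℝ)⁻¹ * ∑ k : Fin nd, z k)
                - ((nd : ℝ)⁻¹ • ∑ k : Fin nd, x (Fin.castLE hNd.le k)) ⬝ᵥ β))
          + αd) :=
      (((((hsum.const_mul ((nd:ℝ)⁻¹)).sub measurable_const).const_mul γd).const_add
        (x i ⬝ᵥ β)).add_const αd).exp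
    have hYcm : Measurable[MeasurableSpace.comap Y inferInstance] Y :=
      Measurable.of_comap_le le_rfl
    exact StronglyMeasurable.aestronglyMeasurable
      (Measurable.stronglyMeasurable (hGm.comp hYcm))
end

section
/- (Theorem 1(ii)) In the single-area nested-error model with log transformation, the conditional expectation of the area mean τ_d = N_d^{-1} Σ_{i=1}^{N_d} exp(y_{di}) given the σ-algebra generated by the sample responses y_{d1},…,y_{dn_d} equals, almost surely, τ̃_d = N_d^{-1}( Σ_{i=1}^{n_d} exp(y_{di}) + Σ_{i=n_d+1}^{N_d} exp(ỹ_{di} + α_d) ), where ỹ_{di} = x_{di}'β + γ_d(ȳ_{ds} − x̄_{ds}'β), γ_d = σu²/(σu² + σe²/n_d), α_d = (1/2)(σu²(1−γ_d) + σe²), ȳ_{ds} = n_d^{-1} Σ_{i=1}^{n_d} y_{di}, and x̄_{ds} = n_d^{-1} Σ_{i=1}^{n_d} x_{di}. -/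
open MeasureTheory ProbabilityTheory Matrix

open scoped ENNReal NNReal

section AuxTilt

lemma pdf_tilt {s : ℝ} (hs : 0 < s) (c x : ℝ) :
    gaussianPDFReal 0 s.toNNReal x * Real.exp (c * x)
      = Real.exp (c ^ 2 * s / 2) * gaussianPDFReal (c * s) s.toNNReal x := by
  have hsv : ((s.toNNReal : ℝ)) = s := Real.coe_toNNReal _ hs.le
  simp only [gaussianPDFReal, hsv]
  have h : -(x - 0) ^ 2 / (2 * s) + c * x = -(x - c * s) ^ 2 / (2 * s) + c ^ 2 * s / 2 := by
    field_simp
    ring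
  rw [mul_assoc, ← Real.exp_add, h, Real.exp_add]
  ring

lemma tilt1D {g : ℝ → ℝ≥0∞} (hg : Measurable g) {s : ℝ} (hs : 0 ≤ s) (c : ℝ) :
    ∫⁻ x, ENNReal.ofReal (Real.exp (c * x)) * g x ∂(gaussianReal 0 s.toNNReal)
      = ENNReal.ofReal (Real.exp (c ^ 2 * s / 2))
        * ∫⁻ x, g (x + c * s) ∂(gaussianReal 0 s.toNNReal) := by
  have hmint : Measurable fun x => ENNReal.ofReal (Real.exp (c * x)) * g x := by
    exact (Real.measurable_exp.comp (measurable_const_mul c)).ennreal_ofReal.mul hg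
  rcases eq_or_lt_of_le hs with rfl | hpos
  · rw [Real.toNNReal_zero, gaussianReal_zero_var,
      lintegral_dirac' _ hmint,
      lintegral_dirac' _ (show Measurable fun x => g (x + c * 0) from
        hg.comp (measurable_add_const _))]
    simp
  · have hv : (s.toNNReal : ℝ≥0) ≠ 0 := by simp [Real.toNNReal_eq_zero, not_le, hpos]
    have hmapped : ∫⁻ x, g (x + c * s) ∂(gaussianReal 0 s.toNNReal)
        = ∫⁻ x, g x ∂(gaussianReal (c * s) s.toNNReal) := by
      rw [← zero_add (c * s), ← gaussianReal_map_add_const (μ := 0) (v := s.toNNReal) (c * s),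
        lintegral_map hg (measurable_add_const _)]
      simp
    rw [hmapped, gaussianReal_of_var_ne_zero _ hv, gaussianReal_of_var_ne_zero _ hv,
      lintegral_withDensity_eq_lintegral_mul _ (measurable_gaussianPDF _ _) hmint,
      lintegral_withDensity_eq_lintegral_mul _ (measurable_gaussianPDF _ _) hg]
    simp only [Pi.mul_apply]
    rw [← lintegral_const_mul (f := fun a => gaussianPDF (c * s) s.toNNReal a * g a) _ ((measurable_gaussianPDF _ _).mul hg)]
    congr 1 with x
    simp only [Pi.mul_apply, gaussianPDF]
    rw [← mul_assoc, ← ENNReal.ofReal_mul (gaussianPDFReal_nonneg _ _ _), pdf_tilt hpos,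
      ENNReal.ofReal_mul (Real.exp_nonneg _), mul_assoc]

lemma joint_law {Ω α : Type*} [MeasurableSpace Ω] [MeasurableSpace α] {P : Measure Ω}
    [IsProbabilityMeasure P] {X : Ω → ℝ} {W : Ω → α}
    (hX : Measurable X) (hW : Measurable W) (hXW : IndepFun X W P) :
    P.map (fun ω => (X ω, W ω)) = (P.map X).prod (P.map W) := by
  haveI : IsProbabilityMeasure (P.map X) := Measure.isProbabilityMeasure_map hX.aemeasurable
  haveI : IsProbabilityMeasure (P.map W) := Measure.isProbabilityMeasure_map hW.aemeasurable
  refine (Measure.prod_eq fun S T hS hT => ?_).symm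
  rw [Measure.map_apply (hX.prodMk hW) (hS.prod hT),
    Measure.map_apply hX hS, Measure.map_apply hW hT]
  have : (fun ω => (X ω, W ω)) ⁻¹' (S ×ˢ T) = X ⁻¹' S ∩ W ⁻¹' T := rfl
  rw [this, hXW.measure_inter_preimage_eq_mul _ _ hS hT]

lemma tilt1 {Ω α : Type*} [MeasurableSpace Ω] [MeasurableSpace α] {P : Measure Ω}
    [IsProbabilityMeasure P] {X : Ω → ℝ} {W : Ω → α}
    (hX : Measurable X) (hW : Measurable W) (hXW : IndepFun X W P)
    {s : ℝ} (hs : 0 ≤ s) (hlaw : P.map X = gaussianReal 0 s.toNNReal) (c : ℝ)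
    {F : ℝ → α → ℝ≥0∞} (hF : Measurable (Function.uncurry F)) :
    ∫⁻ ω, ENNReal.ofReal (Real.exp (c * X ω)) * F (X ω) (W ω) ∂P
      = ENNReal.ofReal (Real.exp (c ^ 2 * s / 2)) * ∫⁻ ω, F (X ω + c * s) (W ω) ∂P := by
  haveI : IsProbabilityMeasure (P.map X) := Measure.isProbabilityMeasure_map hX.aemeasurable
  haveI : IsProbabilityMeasure (P.map W) := Measure.isProbabilityMeasure_map hW.aemeasurable
  have hmap := joint_law hX hW hXW
  have hFm : ∀ a, Measurable (F a) := fun a => hF.comp (measurable_prodMk_left)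
  have hg : Measurable fun a => ∫⁻ w, F a w ∂(P.map W) := hF.lintegral_prod_right
  have hXW' : Measurable fun ω => (X ω, W ω) := hX.prodMk hW
  have h1 : ∫⁻ ω, ENNReal.ofReal (Real.exp (c * X ω)) * F (X ω) (W ω) ∂P
      = ∫⁻ a, ENNReal.ofReal (Real.exp (c * a)) * ∫⁻ w, F a w ∂(P.map W) ∂(P.map X) := by
    have hm1 : Measurable fun p : ℝ × α => ENNReal.ofReal (Real.exp (c * p.1)) * F p.1 p.2 :=
      ((Real.measurable_exp.comp (measurable_const_mul c)).comp
        measurable_fst).ennreal_ofReal.mul hF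
    rw [← lintegral_map (f := fun p : ℝ × α => ENNReal.ofReal (Real.exp (c * p.1)) * F p.1 p.2)
        hm1 hXW', hmap, lintegral_prod _ hm1.aemeasurable]
    simp_rw [lintegral_const_mul _ (hFm _)]
  have h2 : ∫⁻ ω, F (X ω + c * s) (W ω) ∂P
      = ∫⁻ a, ∫⁻ w, F (a + c * s) w ∂(P.map W) ∂(P.map X) := by
    have hm2 : Measurable fun p : ℝ × α => F (p.1 + c * s) p.2 :=
      hF.comp ((measurable_fst.add_const _).prodMk measurable_snd)
    rw [← lintegral_map (f := fun p : ℝ × α => F (p.1 + c * s) p.2) hm2 hXW', hmap,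
      lintegral_prod _ hm2.aemeasurable]
  rw [h1, h2, hlaw]
  exact tilt1D hg hs c

lemma exp_moment {Ω : Type*} [MeasurableSpace Ω] {P : Measure Ω} [IsProbabilityMeasure P]
    {X : Ω → ℝ} (hX : Measurable X) {s : ℝ} (hs : 0 ≤ s)
    (hlaw : P.map X = gaussianReal 0 s.toNNReal) (c : ℝ) :
    ∫⁻ ω, ENNReal.ofReal (Real.exp (c * X ω)) ∂P
      = ENNReal.ofReal (Real.exp (c ^ 2 * s / 2)) := by
  haveI : IsProbabilityMeasure (gaussianReal 0 s.toNNReal) := by infer_instance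
  calc ∫⁻ ω, ENNReal.ofReal (Real.exp (c * X ω)) ∂P
      = ∫⁻ x, ENNReal.ofReal (Real.exp (c * x)) ∂(gaussianReal 0 s.toNNReal) := by
        rw [← hlaw, lintegral_map (f := fun x => ENNReal.ofReal (Real.exp (c * x)))
          (Real.measurable_exp.comp (measurable_const_mul c)).ennreal_ofReal hX]
    _ = ∫⁻ x, ENNReal.ofReal (Real.exp (c * x)) * (fun _ : ℝ => (1 : ℝ≥0∞)) x
          ∂(gaussianReal 0 s.toNNReal) := by simp
    _ = ENNReal.ofReal (Real.exp (c ^ 2 * s / 2)) := by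
        rw [tilt1D measurable_const hs c]; simp

lemma integrable_exp_gauss {Ω : Type*} [MeasurableSpace Ω] {P : Measure Ω}
    [IsProbabilityMeasure P] {X : Ω → ℝ} (hX : Measurable X) {s : ℝ} (hs : 0 ≤ s)
    (hlaw : P.map X = gaussianReal 0 s.toNNReal) (c : ℝ) :
    Integrable (fun ω => Real.exp (c * X ω)) P := by
  refine ⟨(Real.measurable_exp.comp (hX.const_mul c)).aestronglyMeasurable, ?_⟩
  rw [hasFiniteIntegral_iff_ofReal (Filter.Eventually.of_forall fun ω => (Real.exp_pos _).le)]
  rw [exp_moment hX hs hlaw c]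
  exact ENNReal.ofReal_lt_top

end AuxTilt

section MainAux

variable {Ω : Type} [MeasurableSpace Ω] {P : Measure Ω} [IsProbabilityMeasure P]
    {Nd : ℕ} {u : Ω → ℝ} {e : Fin Nd → Ω → ℝ}
    (hum : Measurable u) (hem : ∀ i, Measurable (e i))
    (hind : iIndepFun (fun o : Option (Fin Nd) => o.elim u e) P)

include hum hem hind in
lemma indep_head (j : Option (Fin Nd)) (T : Finset (Option (Fin Nd))) (hj : j ∉ T) :
    IndepFun (j.elim u e) (fun ω => fun t : {x // x ∈ T} => (t : Option (Fin Nd)).elim u e ω)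
      P := by
  have hmeasZ : ∀ o : Option (Fin Nd), Measurable (o.elim u e) := by
    rintro (_ | j); exacts [hum, hem j]
  have h := hind.indepFun_finset {j} T (Finset.disjoint_singleton_left.mpr hj) hmeasZ
  exact h.comp (measurable_pi_apply (⟨j, Finset.mem_singleton_self j⟩ :
    {x // x ∈ ({j} : Finset (Option (Fin Nd)))})) measurable_id

include hum hem hind in
lemma tiltE {nd : ℕ} {emb : Fin nd → Fin Nd} (hembinj : Function.Injective emb)
    {σe2 : ℝ} (hσe : 0 ≤ σe2) (he : ∀ i, P.map (e i) = gaussianReal 0 σe2.toNNReal)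
    (c : ℝ) (t : Finset (Fin nd)) (F : ℝ → (Fin nd → ℝ) → ℝ≥0∞)
    (hF : Measurable (Function.uncurry F)) :
    ∫⁻ ω, ENNReal.ofReal (Real.exp (∑ k ∈ t, c * e (emb k) ω))
        * F (u ω) (fun k => e (emb k) ω) ∂P
      = ENNReal.ofReal (Real.exp (t.card * (c ^ 2 * σe2) / 2))
        * ∫⁻ ω, F (u ω) (fun k => e (emb k) ω + if k ∈ t then c * σe2 else 0) ∂P := by
  classical
  induction t using Finset.induction_on generalizing F with
  | empty => simp
  | @insert k0 t' hk0 IH =>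
    set g : ℝ → (Fin nd → ℝ) → (Fin nd → ℝ) := fun a z k => if k = k0 then a else z k with hgdef
    set W : Ω → ℝ × (Fin nd → ℝ) :=
      fun ω => (u ω, fun k => if _h : k = k0 then 0 else e (emb k) ω) with hWdef
    set F' : ℝ → (ℝ × (Fin nd → ℝ)) → ℝ≥0∞ :=
      fun a p => ENNReal.ofReal (Real.exp (∑ k ∈ t', c * g a p.2 k)) * F p.1 (g a p.2)
      with hF'def
    have hgm : Measurable fun q : ℝ × (ℝ × (Fin nd → ℝ)) => g q.1 q.2.2 := by
      refine measurable_pi_lambda _ fun k => ?_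
      by_cases h : k = k0
      · simpa [hgdef, h] using measurable_fst
      · simp only [hgdef, h, if_false]
        exact (measurable_pi_apply k).comp (measurable_snd.comp measurable_snd)
    have hF'm : Measurable (Function.uncurry F') := by
      refine Measurable.mul ?_ (hF.comp ((measurable_fst.comp measurable_snd).prodMk hgm))
      refine Measurable.ennreal_ofReal (Real.measurable_exp.comp ?_)
      exact Finset.measurable_sum _ fun k _ =>
        ((measurable_pi_apply k).comp hgm).const_mul c
    have hWm : Measurable W := by
      refine Measurable.prodMk hum (measurable_pi_lambda _ fun k => ?_)
      by_cases h : k = k0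
      · simp only [hWdef, h, dif_pos]; exact measurable_const
      · simp only [hWdef, h, dif_neg, not_false_iff]; exact hem (emb k)
    have hindep : IndepFun (e (emb k0)) W P := by
      set T : Finset (Option (Fin Nd)) :=
        insert none ((Finset.univ.erase k0).image fun k => some (emb k)) with hTdef
      have hj : some (emb k0) ∉ T := by
        simp only [hTdef, Finset.mem_insert, Finset.mem_image, Finset.mem_erase]
        rintro (h | ⟨k, ⟨hk, -⟩, hk2⟩)
        · cases h
        · exact hk (hembinj (Option.some_injective _ hk2))
      have h := indep_head hum hem hind (some (emb k0)) T hj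
      have hmem : ∀ k : Fin nd, k ≠ k0 → some (emb k) ∈ T := fun k hk =>
        Finset.mem_insert_of_mem (Finset.mem_image_of_mem _
          (Finset.mem_erase.mpr ⟨hk, Finset.mem_univ k⟩))
      set ψ : ({x // x ∈ T} → ℝ) → ℝ × (Fin nd → ℝ) := fun v =>
        (v ⟨none, Finset.mem_insert_self none _⟩,
         fun k => if h : k = k0 then 0 else v ⟨some (emb k), hmem k h⟩) with hψdef
      have hψm : Measurable ψ := by
        refine Measurable.prodMk (measurable_pi_apply _)
          (measurable_pi_lambda _ fun k => ?_)
        by_cases h : k = k0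
        · simp only [hψdef, h, dif_pos]; exact measurable_const
        · simp only [hψdef, h, dif_neg, not_false_iff]; exact measurable_pi_apply _
      exact h.comp measurable_id hψm
    have key := tilt1 (hem (emb k0)) hWm hindep hσe (he (emb k0)) c (F := F') hF'm
    have lhs_eq : ∫⁻ ω, ENNReal.ofReal (Real.exp (∑ k ∈ insert k0 t', c * e (emb k) ω))
        * F (u ω) (fun k => e (emb k) ω) ∂P
        = ∫⁻ ω, ENNReal.ofReal (Real.exp (c * e (emb k0) ω)) * F' (e (emb k0) ω) (W ω) ∂P := by
      refine lintegral_congr fun ω => ?_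
      have hg1 : g (e (emb k0) ω) (W ω).2 = fun k => e (emb k) ω := by
        funext k; by_cases h : k = k0 <;> simp [hgdef, hWdef, h]
      simp only [hF'def]
      rw [hg1]
      simp only [hWdef]
      rw [Finset.sum_insert hk0, Real.exp_add, ENNReal.ofReal_mul (Real.exp_nonneg _),
        mul_assoc]
    set Ft : ℝ → (Fin nd → ℝ) → ℝ≥0∞ :=
      fun b z => F b (fun k => z k + if k = k0 then c * σe2 else 0) with hFtdef
    have hFtm : Measurable (Function.uncurry Ft) := by
      have : Function.uncurry Ft = fun q : ℝ × (Fin nd → ℝ) =>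
          Function.uncurry F (q.1, fun k => q.2 k + if k = k0 then c * σe2 else 0) := rfl
      rw [this]
      refine hF.comp (Measurable.prodMk measurable_fst (measurable_pi_lambda _ fun k => ?_))
      exact ((measurable_pi_apply k).comp measurable_snd).add_const _
    have rhs_eq : ∫⁻ ω, F' (e (emb k0) ω + c * σe2) (W ω) ∂P
        = ∫⁻ ω, ENNReal.ofReal (Real.exp (∑ k ∈ t', c * e (emb k) ω))
            * Ft (u ω) (fun k => e (emb k) ω) ∂P := by
      refine lintegral_congr fun ω => ?_
      have hg2 : g (e (emb k0) ω + c * σe2) (W ω).2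
          = fun k => e (emb k) ω + if k = k0 then c * σe2 else 0 := by
        funext k; by_cases h : k = k0 <;> simp [hgdef, hWdef, h]
      have hsum : ∑ k ∈ t', c * g (e (emb k0) ω + c * σe2) (W ω).2 k
          = ∑ k ∈ t', c * e (emb k) ω := by
        refine Finset.sum_congr rfl fun k hk => ?_
        have hkne : k ≠ k0 := fun h => hk0 (h ▸ hk)
        rw [hg2]
        simp [hkne]
      simp only [hF'def, hFtdef]
      rw [hsum, hg2]
    rw [lhs_eq, key, rhs_eq, IH Ft hFtm]
    have harg : ∫⁻ ω, Ft (u ω) (fun k => e (emb k) ω + if k ∈ t' then c * σe2 else 0) ∂P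
        = ∫⁻ ω, F (u ω) (fun k => e (emb k) ω + if k ∈ insert k0 t' then c * σe2 else 0)
            ∂P := by
      refine lintegral_congr fun ω => ?_
      simp only [hFtdef]
      congr 1
      funext k
      by_cases h : k = k0
      · subst h
        simp [hk0]
      · simp [h, Finset.mem_insert]
    rw [harg, ← mul_assoc, ← ENNReal.ofReal_mul (Real.exp_nonneg _), ← Real.exp_add,
      Finset.card_insert_of_notMem hk0]
    congr 3
    push_cast
    ring

include hum hem hind in
lemma indepUE {nd : ℕ} (emb : Fin nd → Fin Nd) :
    IndepFun u (fun ω => fun k : Fin nd => e (emb k) ω) P := by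
  classical
  have h := indep_head hum hem hind none (Finset.univ.image fun k : Fin nd => some (emb k))
    (by simp)
  have hmem : ∀ k : Fin nd, some (emb k)
      ∈ Finset.univ.image fun k : Fin nd => some (emb k) := fun k =>
    Finset.mem_image_of_mem _ (Finset.mem_univ k)
  exact h.comp measurable_id (measurable_pi_lambda _ fun k =>
    measurable_pi_apply (⟨some (emb k), hmem k⟩ : {x // x ∈ _}))

include hum hem hind in
lemma indepEI {nd : ℕ} (emb : Fin nd → Fin Nd) (i : Fin Nd) (hi : ∀ k, emb k ≠ i) :
    IndepFun (e i) (fun ω => (u ω, fun k : Fin nd => e (emb k) ω)) P := by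
  classical
  set T : Finset (Option (Fin Nd)) :=
    insert none (Finset.univ.image fun k : Fin nd => some (emb k)) with hTdef
  have hj : some i ∉ T := by
    simp only [hTdef, Finset.mem_insert, Finset.mem_image, Finset.mem_univ, true_and]
    rintro (h | ⟨k, hk⟩)
    · cases h
    · exact hi k (Option.some_injective _ hk)
  have h := indep_head hum hem hind (some i) T hj
  have hmem : ∀ k : Fin nd, some (emb k) ∈ T := fun k =>
    Finset.mem_insert_of_mem (Finset.mem_image_of_mem _ (Finset.mem_univ k))
  exact h.comp measurable_id
    (Measurable.prodMk (measurable_pi_apply ⟨none, Finset.mem_insert_self none _⟩)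
      (measurable_pi_lambda _ fun k => measurable_pi_apply ⟨some (emb k), hmem k⟩))

include hum hem hind in
lemma chainL {nd : ℕ} {emb : Fin nd → Fin Nd}
    {σu2 σe2 : ℝ} (hσu : 0 ≤ σu2) (hσe : 0 ≤ σe2)
    (hu : P.map u = gaussianReal 0 σu2.toNNReal)
    (he : ∀ i, P.map (e i) = gaussianReal 0 σe2.toNNReal)
    (i : Fin Nd) (hi : ∀ k, emb k ≠ i)
    (G : (Fin nd → ℝ) → ℝ≥0∞) (hG : Measurable G) :
    ∫⁻ ω, G (fun k => u ω + e (emb k) ω) * ENNReal.ofReal (Real.exp (u ω + e i ω)) ∂P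
      = ENNReal.ofReal (Real.exp (σu2 / 2 + σe2 / 2))
        * ∫⁻ ω, G (fun k => u ω + e (emb k) ω + σu2) ∂P := by
  have hEm : Measurable fun ω => fun k : Fin nd => e (emb k) ω :=
    measurable_pi_lambda _ fun k => hem (emb k)
  set F1 : ℝ → (Fin nd → ℝ) → ℝ≥0∞ := fun a z => G (fun k => a + z k) with hF1def
  have hF1m : Measurable (Function.uncurry F1) := by
    have : Function.uncurry F1 = fun q : ℝ × (Fin nd → ℝ) => G (fun k => q.1 + q.2 k) := rfl
    rw [this]
    exact hG.comp (measurable_pi_lambda _ fun k =>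
      measurable_fst.add ((measurable_pi_apply k).comp measurable_snd))
  have step1 : ∫⁻ ω, G (fun k => u ω + e (emb k) ω) * ENNReal.ofReal (Real.exp (u ω + e i ω)) ∂P
      = ENNReal.ofReal (Real.exp (σe2 / 2))
        * ∫⁻ ω, ENNReal.ofReal (Real.exp (1 * u ω)) * F1 (u ω) (fun k => e (emb k) ω) ∂P := by
    have hpt : ∀ ω, G (fun k => u ω + e (emb k) ω) * ENNReal.ofReal (Real.exp (u ω + e i ω))
        = ENNReal.ofReal (Real.exp (e i ω))
          * (ENNReal.ofReal (Real.exp (1 * u ω)) * F1 (u ω) (fun k => e (emb k) ω)) := by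
      intro ω
      rw [Real.exp_add, ENNReal.ofReal_mul (Real.exp_nonneg _)]
      simp only [hF1def, one_mul]
      ring
    simp_rw [hpt]
    have hindep := (indepEI hum hem hind emb i hi).comp
      (Real.measurable_exp.ennreal_ofReal)
      (show Measurable fun p : ℝ × (Fin nd → ℝ) =>
          ENNReal.ofReal (Real.exp (1 * p.1)) * F1 p.1 p.2 from
        ((Real.measurable_exp.comp (measurable_const_mul 1)).comp
          measurable_fst).ennreal_ofReal.mul (hF1m.comp (measurable_fst.prodMk measurable_snd)))
    have hfg := lintegral_mul_eq_lintegral_mul_lintegral_of_indepFun (μ := P)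
      (f := fun ω => ENNReal.ofReal (Real.exp (e i ω)))
      (g := fun ω => ENNReal.ofReal (Real.exp (1 * u ω)) * F1 (u ω) (fun k => e (emb k) ω))
      (Real.measurable_exp.ennreal_ofReal.comp (hem i))
      (((Real.measurable_exp.comp (measurable_const_mul 1)).comp hum).ennreal_ofReal.mul
        (hF1m.comp (hum.prodMk hEm))) hindep
    simp only [Pi.mul_apply] at hfg
    rw [hfg]
    congr 1
    have := exp_moment (hem i) hσe (he i) 1
    simpa using this
  rw [step1, tilt1 hum hEm (indepUE hum hem hind emb) hσu hu 1 hF1m]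
  rw [← mul_assoc, ← ENNReal.ofReal_mul (Real.exp_nonneg _), ← Real.exp_add]
  have harg : ∀ ω, F1 (u ω + 1 * σu2) (fun k => e (emb k) ω)
      = G (fun k => u ω + e (emb k) ω + σu2) := by
    intro ω
    simp only [hF1def, one_mul]
    congr 1
    funext k
    ring
  rw [lintegral_congr harg]
  congr 2
  ring

include hum hem hind in
lemma chainR {nd : ℕ} (hnd : 0 < nd) {emb : Fin nd → Fin Nd} (hembinj : Function.Injective emb)
    {σu2 σe2 γd : ℝ} (hσu : 0 ≤ σu2) (hσe : 0 ≤ σe2)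
    (hu : P.map u = gaussianReal 0 σu2.toNNReal)
    (he : ∀ i, P.map (e i) = gaussianReal 0 σe2.toNNReal)
    (hγsum : γd * (σu2 + σe2 / nd) = σu2)
    (G : (Fin nd → ℝ) → ℝ≥0∞) (hG : Measurable G) :
    ∫⁻ ω, G (fun k => u ω + e (emb k) ω)
        * ENNReal.ofReal (Real.exp (γd * (u ω + (nd : ℝ)⁻¹ * ∑ k : Fin nd, e (emb k) ω))) ∂P
      = ENNReal.ofReal (Real.exp (γd * σu2 / 2))
        * ∫⁻ ω, G (fun k => u ω + e (emb k) ω + σu2) ∂P := by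
  have hndR : (nd : ℝ) ≠ 0 := Nat.cast_ne_zero.mpr hnd.ne'
  have hγ' : γd * σu2 * nd + γd * σe2 = σu2 * nd := by
    have h := congrArg (fun r => r * (nd : ℝ)) hγsum
    field_simp at h
    linarith [h]
  have hEm : Measurable fun ω => fun k : Fin nd => e (emb k) ω :=
    measurable_pi_lambda _ fun k => hem (emb k)
  set c : ℝ := γd / nd with hcdef
  set F1 : ℝ → (Fin nd → ℝ) → ℝ≥0∞ :=
    fun a z => ENNReal.ofReal (Real.exp (∑ k : Fin nd, c * z k)) * G (fun k => a + z k)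
    with hF1def
  have hF1m : Measurable (Function.uncurry F1) := by
    have : Function.uncurry F1 = fun q : ℝ × (Fin nd → ℝ) =>
        ENNReal.ofReal (Real.exp (∑ k : Fin nd, c * q.2 k)) * G (fun k => q.1 + q.2 k) := rfl
    rw [this]
    refine Measurable.mul ?_ (hG.comp (measurable_pi_lambda _ fun k =>
      measurable_fst.add ((measurable_pi_apply k).comp measurable_snd)))
    exact (Real.measurable_exp.comp (Finset.measurable_sum _ fun k _ =>
      Measurable.const_mul (f := fun q : ℝ × (Fin nd → ℝ) => q.2 k)
        ((measurable_pi_apply k).comp measurable_snd) c)).ennreal_ofReal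
  have step0 : ∀ ω, G (fun k => u ω + e (emb k) ω)
      * ENNReal.ofReal (Real.exp (γd * (u ω + (nd : ℝ)⁻¹ * ∑ k : Fin nd, e (emb k) ω)))
      = ENNReal.ofReal (Real.exp (γd * u ω)) * F1 (u ω) (fun k => e (emb k) ω) := by
    intro ω
    simp only [hF1def]
    rw [mul_comm, ← mul_assoc, ← ENNReal.ofReal_mul (Real.exp_nonneg _), ← Real.exp_add]
    congr 2
    rw [← Finset.mul_sum]
    congr 1
    simp only [hcdef]
    field_simp
  rw [lintegral_congr step0, tilt1 hum hEm (indepUE hum hem hind emb) hσu hu γd hF1m]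
  set F2 : ℝ → (Fin nd → ℝ) → ℝ≥0∞ := fun b z => G (fun k => b + γd * σu2 + z k) with hF2def
  have hF2m : Measurable (Function.uncurry F2) := by
    have : Function.uncurry F2 = fun q : ℝ × (Fin nd → ℝ) =>
        G (fun k => q.1 + γd * σu2 + q.2 k) := rfl
    rw [this]
    exact hG.comp (measurable_pi_lambda _ fun k =>
      (measurable_fst.add_const _).add ((measurable_pi_apply k).comp measurable_snd))
  have step1 : ∀ ω, F1 (u ω + γd * σu2) (fun k => e (emb k) ω)
      = ENNReal.ofReal (Real.exp (∑ k ∈ Finset.univ, c * e (emb k) ω))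
        * F2 (u ω) (fun k => e (emb k) ω) := by
    intro ω; rfl
  rw [lintegral_congr step1,
    tiltE hum hem hind hembinj hσe he c Finset.univ F2 hF2m]
  have step2 : ∀ ω, F2 (u ω) (fun k => e (emb k) ω + if k ∈ Finset.univ then c * σe2 else 0)
      = G (fun k => u ω + e (emb k) ω + σu2) := by
    intro ω
    simp only [hF2def, Finset.mem_univ, if_true]
    congr 1
    funext k
    have hthis : γd * σu2 + c * σe2 = σu2 := by
      simp only [hcdef]
      field_simp
      linear_combination hγ'
    linear_combination hthis
  rw [lintegral_congr step2, ← mul_assoc, ← ENNReal.ofReal_mul (Real.exp_nonneg _),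
    ← Real.exp_add]
  congr 3
  simp only [Finset.card_univ, Fintype.card_fin, hcdef]
  field_simp
  linear_combination γd * hγ'

end MainAux

/-- Theorem 1(ii): in the single-area nested-error model with log transformation, the best
predictor of the area mean `τ_d = N_d⁻¹ ∑ exp(y_{di})`, i.e. its conditional expectation
given the sample responses, equals a.s. the sum of sampled `exp(y_{di})` plus
`exp(ỹ_{di} + α_d)` over out-of-sample units, divided by `N_d`. -/
theorem best_predictor_area_mean
    {Ω : Type} [MeasurableSpace Ω] (P : Measure Ω) [IsProbabilityMeasure P]
    (p nd Nd : ℕ) (hnd : 1 ≤ nd) (hNd : nd < Nd)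
    (σu2 σe2 : ℝ) (hσu : 0 ≤ σu2) (hσe : 0 < σe2)
    (x : Fin Nd → Fin p → ℝ) (β : Fin p → ℝ)
    (u : Ω → ℝ) (e : Fin Nd → Ω → ℝ)
    (hum : Measurable u) (hem : ∀ i, Measurable (e i))
    (hu : P.map u = gaussianReal 0 σu2.toNNReal)
    (he : ∀ i, P.map (e i) = gaussianReal 0 σe2.toNNReal)
    (hind : iIndepFun
      (fun o : Option (Fin Nd) => o.elim u e) P)
    (y : Fin Nd → Ω → ℝ) (hy : ∀ i ω, y i ω = x i ⬝ᵥ β + u ω + e i ω)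
    (γd αd : ℝ)
    (hγ : γd = σu2 / (σu2 + σe2 / nd))
    (hα : αd = (1 / 2) * (σu2 * (1 - γd) + σe2)) :
    P[(fun ω => (Nd : ℝ)⁻¹ * ∑ i : Fin Nd, Real.exp (y i ω)) |
        MeasurableSpace.comap
          (fun ω => fun k : Fin nd => y (Fin.castLE hNd.le k) ω) inferInstance]
      =ᵐ[P]
    fun ω => (Nd : ℝ)⁻¹ *
      ((∑ k : Fin nd, Real.exp (y (Fin.castLE hNd.le k) ω))
        + ∑ i ∈ Finset.univ.filter (fun i : Fin Nd => nd ≤ (i : ℕ)),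
            Real.exp
              ((x i ⬝ᵥ β
                  + γd * (((nd : ℝ)⁻¹ * ∑ k : Fin nd, y (Fin.castLE hNd.le k) ω)
                      - ((nd : ℝ)⁻¹ • ∑ k : Fin nd, x (Fin.castLE hNd.le k)) ⬝ᵥ β))
                + αd)) := by
  classical
  have hndpos : 0 < nd := hnd
  have hndR : (nd : ℝ) ≠ 0 := Nat.cast_ne_zero.mpr hndpos.ne'
  set emb : Fin nd → Fin Nd := Fin.castLE hNd.le with hembdef
  have hembinj : Function.Injective emb := Fin.castLE_injective _
  have hym : ∀ i, Measurable (y i) := fun i => by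
    have h : y i = fun ω => x i ⬝ᵥ β + u ω + e i ω := funext fun ω => hy i ω
    rw [h]; exact (measurable_const.add hum).add (hem i)
  set S : Ω → Fin nd → ℝ := fun ω k => y (emb k) ω with hSdef
  have hSm : Measurable S := measurable_pi_lambda _ fun k => hym _
  have hm : MeasurableSpace.comap S inferInstance ≤ _ := hSm.comap_le
  haveI hSF : SigmaFinite (P.trim hm) := by
    have h : IsFiniteMeasure (P.trim hm) := by
      constructor
      rw [trim_measurableSet_eq hm MeasurableSet.univ]
      exact measure_lt_top P _
    infer_instance
  -- algebraic facts
  have hDpos : 0 < σu2 + σe2 / nd := by positivity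
  have hγsum : γd * (σu2 + σe2 / nd) = σu2 := by
    rw [hγ]; field_simp
  have hγσu : 0 ≤ γd * σu2 := by
    rw [hγ]; positivity
  -- the out-of-sample index set
  set out : Finset (Fin Nd) := Finset.univ.filter (fun i : Fin Nd => nd ≤ (i : ℕ)) with houtdef
  have hout_ne : ∀ i ∈ out, ∀ k : Fin nd, emb k ≠ i := by
    intro i hi k
    have h1 : (emb k : ℕ) = (k : ℕ) := rfl
    have h2 : nd ≤ (i : ℕ) := by simpa [houtdef] using hi
    intro hcon
    have := congrArg Fin.val hcon
    omega
  set xb : ℝ := ((nd : ℝ)⁻¹ • ∑ k : Fin nd, x (emb k)) ⬝ᵥ β with hxbdef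
  have hmean : ∀ ω, (nd : ℝ)⁻¹ * (∑ k : Fin nd, y (emb k) ω) - xb
      = u ω + (nd : ℝ)⁻¹ * ∑ k : Fin nd, e (emb k) ω := by
    intro ω
    have hxb : xb = (nd : ℝ)⁻¹ * ∑ k : Fin nd, x (emb k) ⬝ᵥ β := by
      simp only [hxbdef, dotProduct, Finset.sum_apply, Pi.smul_apply, smul_eq_mul,
        Finset.mul_sum, Finset.sum_mul]
      rw [Finset.sum_comm]
      exact Finset.sum_congr rfl fun k _ => Finset.sum_congr rfl fun j _ => by ring
    simp only [hy, hxb]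
    rw [Finset.sum_add_distrib, Finset.sum_add_distrib, Finset.sum_const, Finset.card_univ,
      Fintype.card_fin, nsmul_eq_mul]
    field_simp
    ring
  have hαkey : αd + γd * σu2 / 2 = σu2 / 2 + σe2 / 2 := by linear_combination hα
  -- integrability of individual exponentials
  have hexpint : ∀ i : Fin Nd, Integrable (fun ω => Real.exp (y i ω)) P := by
    intro i
    have hiuei : IndepFun u (e i) P :=
      hind.indepFun (show (none : Option (Fin Nd)) ≠ some i by simp)
    have h1 : Integrable (fun ω => Real.exp (u ω)) P := by
      simpa using integrable_exp_gauss hum hσu hu 1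
    have h2 : Integrable (fun ω => Real.exp (e i ω)) P := by
      simpa using integrable_exp_gauss (hem i) hσe.le (he i) 1
    have h3 : Integrable (fun ω => Real.exp (u ω) * Real.exp (e i ω)) P := by
      have := (hiuei.comp Real.measurable_exp Real.measurable_exp).integrable_mul h1 h2
      exact this
    have h4 : (fun ω => Real.exp (y i ω))
        = fun ω => Real.exp (x i ⬝ᵥ β) * (Real.exp (u ω) * Real.exp (e i ω)) := by
      funext ω
      rw [hy, Real.exp_add, Real.exp_add, mul_assoc]
    rw [h4]
    exact h3.const_mul _
  have hf_int : Integrable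
      (fun ω => (Nd : ℝ)⁻¹ * ∑ i : Fin Nd, Real.exp (y i ω)) P :=
    (integrable_finset_sum Finset.univ fun i _ => hexpint i).const_mul _
  -- integrability of the exp(γ (u + ē)) factor
  have hEm : Measurable fun ω => fun k : Fin nd => e (emb k) ω :=
    measurable_pi_lambda _ fun k => hem (emb k)
  have hgR_meas : Measurable fun ω =>
      Real.exp (γd * (u ω + (nd : ℝ)⁻¹ * ∑ k : Fin nd, e (emb k) ω)) := by
    refine Real.measurable_exp.comp (Measurable.const_mul ?_ γd)
    exact hum.add ((Finset.measurable_sum _ fun k _ => hem (emb k)).const_mul _)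
  have hg2base : Integrable (fun ω =>
      Real.exp (γd * (u ω + (nd : ℝ)⁻¹ * ∑ k : Fin nd, e (emb k) ω))) P := by
    refine ⟨hgR_meas.aestronglyMeasurable, ?_⟩
    rw [hasFiniteIntegral_iff_ofReal (Filter.Eventually.of_forall fun ω => (Real.exp_pos _).le)]
    have h := chainR hum hem hind hndpos hembinj hσu hσe.le hu he hγsum
      (fun _ => (1 : ℝ≥0∞)) measurable_const
    simp only [one_mul, mul_one, lintegral_const, measure_univ] at h
    rw [h]
    exact ENNReal.ofReal_lt_top
  -- the function applied to samples defining the RHS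
  set G : (Fin nd → ℝ) → ℝ := fun z => (Nd : ℝ)⁻¹ *
      ((∑ k : Fin nd, Real.exp (z k))
        + ∑ i ∈ out, Real.exp ((x i ⬝ᵥ β
            + γd * (((nd : ℝ)⁻¹ * ∑ k : Fin nd, z k) - xb)) + αd)) with hGdef
  have hGmeas : Measurable G := by
    refine Measurable.const_mul (Measurable.add ?_ ?_) _
    · exact Finset.measurable_sum _ fun k _ =>
        Real.measurable_exp.comp (measurable_pi_apply k)
    · refine Finset.measurable_sum _ fun i _ => Real.measurable_exp.comp ?_
      refine Measurable.add_const (Measurable.const_add ?_ _) _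
      refine Measurable.const_mul (Measurable.sub_const ?_ _) γd
      exact (Finset.measurable_sum _ fun k _ => measurable_pi_apply k).const_mul _
  have hgS : (fun ω => (Nd : ℝ)⁻¹ *
      ((∑ k : Fin nd, Real.exp (y (emb k) ω))
        + ∑ i ∈ out, Real.exp ((x i ⬝ᵥ β
            + γd * (((nd : ℝ)⁻¹ * ∑ k : Fin nd, y (emb k) ω) - xb)) + αd)))
      = fun ω => G (S ω) := rfl
  -- integrability of the RHS
  have hg_int : Integrable (fun ω => G (S ω)) P := by
    have hterm : ∀ i ∈ out, Integrable (fun ω =>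
        Real.exp ((x i ⬝ᵥ β
          + γd * (((nd : ℝ)⁻¹ * ∑ k : Fin nd, y (emb k) ω) - xb)) + αd)) P := by
      intro i _
      have hrw : (fun ω => Real.exp ((x i ⬝ᵥ β
          + γd * (((nd : ℝ)⁻¹ * ∑ k : Fin nd, y (emb k) ω) - xb)) + αd))
          = fun ω => Real.exp (x i ⬝ᵥ β + αd) *
              Real.exp (γd * (u ω + (nd : ℝ)⁻¹ * ∑ k : Fin nd, e (emb k) ω)) := by
        funext ω
        rw [← Real.exp_add, hmean ω]
        ring_nf
      rw [hrw]
      exact hg2base.const_mul _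
    have h1 : Integrable (fun ω => ∑ k : Fin nd, Real.exp (y (emb k) ω)) P :=
      integrable_finset_sum Finset.univ fun k _ => hexpint (emb k)
    have h2 := integrable_finset_sum out hterm
    rw [← hgS]
    exact (h1.add h2).const_mul _
  -- measurability wrt the sample sigma-algebra
  have hgm' : AEStronglyMeasurable[MeasurableSpace.comap S inferInstance]
      (fun ω => G (S ω)) P := by
    have hScm : Measurable[MeasurableSpace.comap S inferInstance] S :=
      Measurable.of_comap_le le_rfl
    exact StronglyMeasurable.aestronglyMeasurable
      (Measurable.stronglyMeasurable (hGmeas.comp hScm))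
  -- the set-integral equality
  have hg_eq : ∀ s : Set Ω, MeasurableSet[MeasurableSpace.comap S inferInstance] s →
      P s < ∞ → ∫ ω in s, G (S ω) ∂P
        = ∫ ω in s, (Nd : ℝ)⁻¹ * ∑ i : Fin Nd, Real.exp (y i ω) ∂P := by
    rintro s ⟨B, hB, rfl⟩ -
    have hA : MeasurableSet (S ⁻¹' B) := hSm hB
    have hfnn : (0 : Ω → ℝ) ≤ᵐ[P.restrict (S ⁻¹' B)]
        fun ω => (Nd : ℝ)⁻¹ * ∑ i : Fin Nd, Real.exp (y i ω) := by
      refine Filter.Eventually.of_forall fun ω => ?_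
      have h0 : (0:ℝ) ≤ ∑ i : Fin Nd, Real.exp (y i ω) :=
        Finset.sum_nonneg fun i _ => (Real.exp_pos _).le
      exact mul_nonneg (inv_nonneg.mpr (Nat.cast_nonneg _)) h0
    have hgnn : (0 : Ω → ℝ) ≤ᵐ[P.restrict (S ⁻¹' B)] fun ω => G (S ω) := by
      refine Filter.Eventually.of_forall fun ω => ?_
      have h1 : (0:ℝ) ≤ ∑ k : Fin nd, Real.exp (y (emb k) ω) :=
        Finset.sum_nonneg fun i _ => (Real.exp_pos _).le
      have h2 : (0:ℝ) ≤ ∑ i ∈ out, Real.exp ((x i ⬝ᵥ β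
          + γd * (((nd : ℝ)⁻¹ * ∑ k : Fin nd, y (emb k) ω) - xb)) + αd) :=
        Finset.sum_nonneg fun i _ => (Real.exp_pos _).le
      simp only [hGdef]
      exact mul_nonneg (inv_nonneg.mpr (Nat.cast_nonneg _)) (add_nonneg h1 h2)
    rw [integral_eq_lintegral_of_nonneg_ae hgnn
        ((hGmeas.comp hSm).aestronglyMeasurable.restrict),
      integral_eq_lintegral_of_nonneg_ae hfnn
        (((Finset.measurable_sum Finset.univ fun i _ =>
          Real.measurable_exp.comp (hym i)).const_mul _).aestronglyMeasurable.restrict)]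
    congr 1
    -- indicator machinery
    set Gind : (Fin nd → ℝ) → ℝ≥0∞ := fun z => Set.indicator B (fun _ => 1) z with hGinddef
    have hGindm : Measurable Gind := measurable_const.indicator hB
    have hAind : ∀ h : Ω → ℝ≥0∞, ∫⁻ ω in S ⁻¹' B, h ω ∂P = ∫⁻ ω, Gind (S ω) * h ω ∂P := by
      intro h
      rw [← lintegral_indicator hA]
      refine lintegral_congr fun ω => ?_
      by_cases hω : S ω ∈ B <;>
        simp [hGinddef, Set.indicator_apply, Set.mem_preimage, hω]
    -- per-out-of-sample-unit key identity
    have hKey : ∀ i ∈ out,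
        ∫⁻ ω in S ⁻¹' B, ENNReal.ofReal (Real.exp (y i ω)) ∂P
          = ∫⁻ ω in S ⁻¹' B, ENNReal.ofReal (Real.exp ((x i ⬝ᵥ β
              + γd * (((nd : ℝ)⁻¹ * ∑ k : Fin nd, y (emb k) ω) - xb)) + αd)) ∂P := by
      intro i hi
      set G' : (Fin nd → ℝ) → ℝ≥0∞ := fun z => Gind (fun k => x (emb k) ⬝ᵥ β + z k)
        with hG'def
      have hG'm : Measurable G' :=
        hGindm.comp (measurable_pi_lambda _ fun k =>
          measurable_const.add (measurable_pi_apply k))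
      have hSz : ∀ ω, Gind (S ω) = G' (fun k => u ω + e (emb k) ω) := by
        intro ω
        simp only [hG'def]
        congr 1
        funext k
        rw [hSdef]
        simp only [hy]
        ring
      have hL : ∫⁻ ω in S ⁻¹' B, ENNReal.ofReal (Real.exp (y i ω)) ∂P
          = ENNReal.ofReal (Real.exp (x i ⬝ᵥ β))
            * (ENNReal.ofReal (Real.exp (σu2 / 2 + σe2 / 2))
              * ∫⁻ ω, G' (fun k => u ω + e (emb k) ω + σu2) ∂P) := by
        rw [hAind]
        have hpt : ∀ ω, Gind (S ω) * ENNReal.ofReal (Real.exp (y i ω))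
            = ENNReal.ofReal (Real.exp (x i ⬝ᵥ β))
              * (G' (fun k => u ω + e (emb k) ω)
                * ENNReal.ofReal (Real.exp (u ω + e i ω))) := by
          intro ω
          rw [hSz ω, hy]
          rw [show x i ⬝ᵥ β + u ω + e i ω = x i ⬝ᵥ β + (u ω + e i ω) by ring,
            Real.exp_add, ENNReal.ofReal_mul (Real.exp_nonneg _)]
          ring
        rw [lintegral_congr hpt,
          lintegral_const_mul _ (show Measurable fun ω => G' (fun k => u ω + e (emb k) ω)
              * ENNReal.ofReal (Real.exp (u ω + e i ω)) from
            (hG'm.comp (measurable_pi_lambda _ fun k => hum.add (hem (emb k)))).mul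
            ((Real.measurable_exp.comp (hum.add (hem i))).ennreal_ofReal)),
          chainL hum hem hind hσu hσe.le hu he i (hout_ne i hi) G' hG'm]
      have hR : ∫⁻ ω in S ⁻¹' B, ENNReal.ofReal (Real.exp ((x i ⬝ᵥ β
            + γd * (((nd : ℝ)⁻¹ * ∑ k : Fin nd, y (emb k) ω) - xb)) + αd)) ∂P
          = ENNReal.ofReal (Real.exp (x i ⬝ᵥ β + αd))
            * (ENNReal.ofReal (Real.exp (γd * σu2 / 2))
              * ∫⁻ ω, G' (fun k => u ω + e (emb k) ω + σu2) ∂P) := by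
        rw [hAind]
        have hpt : ∀ ω, Gind (S ω) * ENNReal.ofReal (Real.exp ((x i ⬝ᵥ β
            + γd * (((nd : ℝ)⁻¹ * ∑ k : Fin nd, y (emb k) ω) - xb)) + αd))
            = ENNReal.ofReal (Real.exp (x i ⬝ᵥ β + αd))
              * (G' (fun k => u ω + e (emb k) ω)
                * ENNReal.ofReal (Real.exp (γd * (u ω
                    + (nd : ℝ)⁻¹ * ∑ k : Fin nd, e (emb k) ω)))) := by
          intro ω
          rw [hSz ω, hmean ω]
          rw [show x i ⬝ᵥ β + γd * (u ω + (nd : ℝ)⁻¹ * ∑ k : Fin nd, e (emb k) ω) + αd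
              = (x i ⬝ᵥ β + αd)
                + γd * (u ω + (nd : ℝ)⁻¹ * ∑ k : Fin nd, e (emb k) ω) by ring,
            Real.exp_add, ENNReal.ofReal_mul (Real.exp_nonneg _)]
          ring
        rw [lintegral_congr hpt,
          lintegral_const_mul _ (show Measurable fun ω => G' (fun k => u ω + e (emb k) ω)
              * ENNReal.ofReal (Real.exp (γd * (u ω
                  + (nd : ℝ)⁻¹ * ∑ k : Fin nd, e (emb k) ω))) from
            (hG'm.comp (measurable_pi_lambda _ fun k => hum.add (hem (emb k)))).mul
            (Real.measurable_exp.ennreal_ofReal.comp ((hum.add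
              ((Finset.measurable_sum _ fun k _ => hem (emb k)).const_mul _)).const_mul γd))),
          chainR hum hem hind hndpos hembinj hσu hσe.le hu he hγsum G' hG'm]
      rw [hL, hR, ← mul_assoc, ← mul_assoc,
        ← ENNReal.ofReal_mul (Real.exp_nonneg _), ← ENNReal.ofReal_mul (Real.exp_nonneg _),
        ← Real.exp_add, ← Real.exp_add]
      congr 3
      linear_combination -hαkey
    -- split the sums
    have himg : Finset.univ.image emb
        = Finset.univ.filter (fun i : Fin Nd => ¬ nd ≤ (i : ℕ)) := by
      ext i
      simp only [Finset.mem_image, Finset.mem_univ, true_and, Finset.mem_filter, not_le]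
      constructor
      · rintro ⟨k, rfl⟩
        exact k.isLt
      · intro h
        exact ⟨⟨(i : ℕ), h⟩, by apply Fin.ext; rfl⟩
    have hsum_in : ∀ (F : Fin Nd → ℝ≥0∞),
        ∑ i ∈ Finset.univ.filter (fun i : Fin Nd => ¬ nd ≤ (i : ℕ)), F i
          = ∑ k : Fin nd, F (emb k) := by
      intro F
      rw [← himg, Finset.sum_image fun a _ b _ h => hembinj h]
    -- expand the f-side
    have hf_expand : ∫⁻ ω in S ⁻¹' B,
        ENNReal.ofReal ((Nd : ℝ)⁻¹ * ∑ i : Fin Nd, Real.exp (y i ω)) ∂P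
        = ENNReal.ofReal ((Nd : ℝ)⁻¹)
          * ((∑ k : Fin nd, ∫⁻ ω in S ⁻¹' B, ENNReal.ofReal (Real.exp (y (emb k) ω)) ∂P)
            + ∑ i ∈ out, ∫⁻ ω in S ⁻¹' B, ENNReal.ofReal (Real.exp (y i ω)) ∂P) := by
      have hpt : ∀ ω, ENNReal.ofReal ((Nd : ℝ)⁻¹ * ∑ i : Fin Nd, Real.exp (y i ω))
          = ENNReal.ofReal ((Nd : ℝ)⁻¹)
            * ∑ i : Fin Nd, ENNReal.ofReal (Real.exp (y i ω)) := by
        intro ω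
        rw [ENNReal.ofReal_mul (by positivity),
          ENNReal.ofReal_sum_of_nonneg fun i _ => (Real.exp_pos _).le]
      rw [lintegral_congr hpt, lintegral_const_mul _
        (show Measurable fun ω => ∑ i : Fin Nd, ENNReal.ofReal (Real.exp (y i ω)) from
          Finset.measurable_sum _ fun i _ =>
            (Real.measurable_exp.comp (hym i)).ennreal_ofReal),
        lintegral_finset_sum _ fun i _ =>
          (show Measurable fun ω => ENNReal.ofReal (Real.exp (y i ω)) from
            (Real.measurable_exp.comp (hym i)).ennreal_ofReal)]
      congr 1
      rw [← Finset.sum_filter_add_sum_filter_not Finset.univ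
        (fun i : Fin Nd => nd ≤ (i : ℕ)), hsum_in]
      rw [add_comm]
    -- expand the g-side
    have hg_expand : ∫⁻ ω in S ⁻¹' B, ENNReal.ofReal (G (S ω)) ∂P
        = ENNReal.ofReal ((Nd : ℝ)⁻¹)
          * ((∑ k : Fin nd, ∫⁻ ω in S ⁻¹' B, ENNReal.ofReal (Real.exp (y (emb k) ω)) ∂P)
            + ∑ i ∈ out, ∫⁻ ω in S ⁻¹' B, ENNReal.ofReal (Real.exp ((x i ⬝ᵥ β
                + γd * (((nd : ℝ)⁻¹ * ∑ k : Fin nd, y (emb k) ω) - xb)) + αd)) ∂P) := by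
      have hpt : ∀ ω, ENNReal.ofReal (G (S ω))
          = ENNReal.ofReal ((Nd : ℝ)⁻¹)
            * ((∑ k : Fin nd, ENNReal.ofReal (Real.exp (y (emb k) ω)))
              + ∑ i ∈ out, ENNReal.ofReal (Real.exp ((x i ⬝ᵥ β
                  + γd * (((nd : ℝ)⁻¹ * ∑ k : Fin nd, y (emb k) ω) - xb)) + αd))) := by
        intro ω
        simp only [hGdef]
        rw [ENNReal.ofReal_mul (by positivity), ENNReal.ofReal_add
            (Finset.sum_nonneg fun i _ => (Real.exp_pos _).le)
            (Finset.sum_nonneg fun i _ => (Real.exp_pos _).le),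
          ENNReal.ofReal_sum_of_nonneg fun i _ => (Real.exp_pos _).le,
          ENNReal.ofReal_sum_of_nonneg fun i _ => (Real.exp_pos _).le]
      have hm1 : ∀ k : Fin nd, Measurable fun ω =>
          ENNReal.ofReal (Real.exp (y (emb k) ω)) := fun k =>
        (Real.measurable_exp.comp (hym (emb k))).ennreal_ofReal
      have hm2 : ∀ i : Fin Nd, Measurable fun ω =>
          ENNReal.ofReal (Real.exp ((x i ⬝ᵥ β
            + γd * (((nd : ℝ)⁻¹ * ∑ k : Fin nd, y (emb k) ω) - xb)) + αd)) := by
        intro i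
        refine (Real.measurable_exp.comp ?_).ennreal_ofReal
        refine Measurable.add_const (Measurable.const_add ?_ _) _
        exact (((Finset.measurable_sum _ fun k _ => hym (emb k)).const_mul
          _).sub_const _).const_mul _
      rw [lintegral_congr hpt, lintegral_const_mul (f := fun ω =>
          (∑ k : Fin nd, ENNReal.ofReal (Real.exp (y (emb k) ω)))
            + ∑ i ∈ out, ENNReal.ofReal (Real.exp ((x i ⬝ᵥ β
              + γd * (((nd : ℝ)⁻¹ * ∑ k : Fin nd, y (emb k) ω) - xb)) + αd))) _
        ((Finset.measurable_sum _ fun k _ => hm1 k).add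
          (Finset.measurable_sum _ fun i _ => hm2 i))]
      congr 1
      rw [lintegral_add_left (Finset.measurable_sum _ fun k _ => hm1 k),
        lintegral_finset_sum _ fun k _ => hm1 k, lintegral_finset_sum _ fun i _ => hm2 i]
    rw [hf_expand, hg_expand]
    congr 2
    exact (Finset.sum_congr rfl hKey).symm
  exact (ae_eq_condExp_of_forall_setIntegral_eq hm hf_int
    (fun s _ _ => hg_int.integrableOn) hg_eq hgm').symm
end

section
/- In the single-area nested-error model with log transformation, for any out-of-sample units i, j ∈ {n_d+1,…,N_d} it holds that E[ exp(ỹ_{di} + α_d) · exp(ỹ_{dj} + α_d) ] = exp( (x_{di}+x_{dj})'β + 2σu² + σe² − σu²(1−γ_d) ), where ỹ_{di} = x_{di}'β + γ_d(ȳ_{ds} − x̄_{ds}'β), γ_d = σu²/(σu² + σe²/n_d), α_d = (1/2)(σu²(1−γ_d) + σe²), ȳ_{ds} = n_d^{-1} Σ_{k=1}^{n_d} y_{dk}, and x̄_{ds} = n_d^{-1} Σ_{k=1}^{n_d} x_{dk}. -/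
open MeasureTheory ProbabilityTheory Matrix


lemma my_sum_dotProduct {n p : ℕ} (x : Fin n → Fin p → ℝ) (β : Fin p → ℝ) :
    (∑ k : Fin n, x k) ⬝ᵥ β = ∑ k : Fin n, x k ⬝ᵥ β := by
  simp only [dotProduct, Finset.sum_apply, Finset.sum_mul]
  exact Finset.sum_comm

lemma my_integral_exp_gaussianReal (t : ℝ) (v : NNReal) :
    ∫ x, Real.exp (t * x) ∂(gaussianReal 0 v) = Real.exp (t ^ 2 * v / 2) := by
  rcases eq_or_ne v 0 with hv | hv
  · subst hv
    simp [gaussianReal_zero_var, integral_dirac]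
  · have hv' : (0:ℝ) < (v:ℝ) := by exact_mod_cast pos_iff_ne_zero.mpr hv
    rw [gaussianReal_of_var_ne_zero _ hv]
    have hmeas : Measurable fun x : ℝ => (gaussianPDFReal 0 v x).toNNReal :=
      (measurable_gaussianPDFReal 0 v).real_toNNReal
    have hdens : gaussianPDF 0 v = fun x => ((gaussianPDFReal 0 v x).toNNReal : ENNReal) := rfl
    rw [hdens, integral_withDensity_eq_integral_smul hmeas]
    have h1 : ∀ x : ℝ, (gaussianPDFReal 0 v x).toNNReal • Real.exp (t * x)
        = Real.exp (t ^ 2 * v / 2) * gaussianPDFReal (t * v) v x := by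
      intro x
      rw [NNReal.smul_def, Real.coe_toNNReal _ (gaussianPDFReal_nonneg _ _ _)]
      simp only [gaussianPDFReal, sub_zero, smul_eq_mul]
      rw [mul_assoc, ← Real.exp_add, mul_left_comm, ← Real.exp_add]
      congr 1
      field_simp
      ring
    simp_rw [h1]
    rw [integral_const_mul, integral_gaussianPDFReal_eq_one (t * v) hv, mul_one]

lemma my_integral_exp_of_map {Ω : Type} [MeasurableSpace Ω] {P : Measure Ω} {X : Ω → ℝ}
    (hX : Measurable X) {v : ℝ} (hv : 0 ≤ v)
    (hmap : P.map X = gaussianReal 0 v.toNNReal) (t : ℝ) :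
    ∫ ω, Real.exp (t * X ω) ∂P = Real.exp (t ^ 2 * v / 2) := by
  have h : ∫ ω, Real.exp (t * X ω) ∂P = ∫ x, Real.exp (t * x) ∂(P.map X) :=
    (integral_map hX.aemeasurable
      ((Real.measurable_exp.comp (measurable_id.const_mul t)).aestronglyMeasurable)).symm
  rw [h, hmap, my_integral_exp_gaussianReal, Real.coe_toNNReal _ hv]

/-- In the single-area nested-error model with log transformation, for out-of-sample units
`i, j`, `E[exp(ỹ_{di}+α_d) · exp(ỹ_{dj}+α_d)]
  = exp((x_{di}+x_{dj})'β + 2σu² + σe² − σu²(1−γ_d))`. -/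
theorem expectation_bp_times_bp
    {Ω : Type} [MeasurableSpace Ω] (P : Measure Ω) [IsProbabilityMeasure P]
    (p nd Nd : ℕ) (hnd : 1 ≤ nd) (hNd : nd < Nd)
    (σu2 σe2 : ℝ) (hσu : 0 ≤ σu2) (hσe : 0 < σe2)
    (x : Fin Nd → Fin p → ℝ) (β : Fin p → ℝ)
    (u : Ω → ℝ) (e : Fin Nd → Ω → ℝ)
    (hum : Measurable u) (hem : ∀ i, Measurable (e i))
    (hu : P.map u = gaussianReal 0 σu2.toNNReal)
    (he : ∀ i, P.map (e i) = gaussianReal 0 σe2.toNNReal)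
    (hind : iIndepFun
      (fun o : Option (Fin Nd) => o.elim u e) P)
    (y : Fin Nd → Ω → ℝ) (hy : ∀ i ω, y i ω = x i ⬝ᵥ β + u ω + e i ω)
    (γd αd : ℝ)
    (hγ : γd = σu2 / (σu2 + σe2 / nd))
    (hα : αd = (1 / 2) * (σu2 * (1 - γd) + σe2))
    (i j : Fin Nd) (hi : nd ≤ (i : ℕ)) (hj : nd ≤ (j : ℕ)) :
    ∫ ω, Real.exp
          ((x i ⬝ᵥ β
              + γd * (((nd : ℝ)⁻¹ * ∑ k : Fin nd, y (Fin.castLE hNd.le k) ω)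
                  - ((nd : ℝ)⁻¹ • ∑ k : Fin nd, x (Fin.castLE hNd.le k)) ⬝ᵥ β))
            + αd)
        * Real.exp
          ((x j ⬝ᵥ β
              + γd * (((nd : ℝ)⁻¹ * ∑ k : Fin nd, y (Fin.castLE hNd.le k) ω)
                  - ((nd : ℝ)⁻¹ • ∑ k : Fin nd, x (Fin.castLE hNd.le k)) ⬝ᵥ β))
            + αd) ∂P
      = Real.exp ((x i + x j) ⬝ᵥ β + 2 * σu2 + σe2 - σu2 * (1 - γd)) := by
  classical
  have hnd0 : (nd : ℝ) ≠ 0 := by positivity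
  set t : ℝ := 2 * γd with ht
  -- the family of scaled random variables
  set W : Option (Fin Nd) → Ω → ℝ :=
    fun o => Option.elim o u (fun k ω => (nd : ℝ)⁻¹ * e k ω) with hWdef
  have hWm : ∀ o, Measurable (W o) := by
    rintro (_ | k)
    · exact hum
    · exact (hem k).const_mul _
  have hW : iIndepFun W P := by
    have h := hind.comp
      (fun o : Option (Fin Nd) => Option.elim o (id : ℝ → ℝ) (fun _ z => (nd : ℝ)⁻¹ * z))
      (by rintro (_ | k)
          · exact measurable_id
          · exact measurable_id.const_mul _)
    convert h using 1
    funext o ω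
    cases o <;> rfl
  -- the finite index set
  have hinj : Function.Injective
      (fun k : Fin nd => (some (Fin.castLE hNd.le k) : Option (Fin Nd))) :=
    fun a b hab => Fin.castLE_injective hNd.le (Option.some_injective _ hab)
  set S : Finset (Option (Fin Nd)) :=
    Finset.univ.image (fun k : Fin nd => (some (Fin.castLE hNd.le k) : Option (Fin Nd))) with hSdef
  have hnone : (none : Option (Fin Nd)) ∉ S := by simp [hSdef]
  set Z : Ω → ℝ := ∑ o ∈ insert none S, W o with hZdef
  have hZ : ∀ ω, Z ω = u ω + (nd : ℝ)⁻¹ * ∑ k : Fin nd, e (Fin.castLE hNd.le k) ω := by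
    intro ω
    rw [hZdef, Finset.sum_apply, Finset.sum_insert hnone, hSdef,
      Finset.sum_image (fun a _ b _ h => hinj h)]
    simp only [hWdef, Option.elim]
    rw [Finset.mul_sum]
  -- the mgf computation
  have hmgf : ∫ ω, Real.exp (t * Z ω) ∂P
      = Real.exp (t ^ 2 * σu2 / 2 + t ^ 2 * σe2 / (2 * nd)) := by
    have h1 : mgf Z P t = ∏ o ∈ insert none S, mgf (W o) P t := hW.mgf_sum hWm _
    have h2 : mgf (W none) P t = Real.exp (t ^ 2 * σu2 / 2) :=
      my_integral_exp_of_map hum hσu hu t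
    have h3 : ∀ k : Fin nd,
        mgf (W (some (Fin.castLE hNd.le k))) P t
          = Real.exp ((t * (nd : ℝ)⁻¹) ^ 2 * σe2 / 2) := by
      intro k
      have heq : (fun ω => Real.exp (t * W (some (Fin.castLE hNd.le k)) ω))
          = fun ω => Real.exp ((t * (nd : ℝ)⁻¹) * e (Fin.castLE hNd.le k) ω) := by
        funext ω
        simp only [hWdef, Option.elim]
        rw [← mul_assoc]
      show ∫ ω, Real.exp (t * W (some (Fin.castLE hNd.le k)) ω) ∂P = _
      rw [heq]
      exact my_integral_exp_of_map (hem _) hσe.le (he _) _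
    have h4 : ∏ o ∈ S, mgf (W o) P t
        = Real.exp ((t * (nd : ℝ)⁻¹) ^ 2 * σe2 / 2) ^ nd := by
      rw [hSdef, Finset.prod_image (fun a _ b _ h => hinj h)]
      simp only [h3]
      rw [Finset.prod_const, Finset.card_univ, Fintype.card_fin]
    have h5 : mgf Z P t = ∫ ω, Real.exp (t * Z ω) ∂P := rfl
    rw [← h5, h1, Finset.prod_insert hnone, h2, h4, ← Real.exp_nat_mul, ← Real.exp_add]
    congr 1
    field_simp
  -- pointwise rewriting of the integrand
  have hC : ∀ ω, Real.exp
          ((x i ⬝ᵥ β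
              + γd * (((nd : ℝ)⁻¹ * ∑ k : Fin nd, y (Fin.castLE hNd.le k) ω)
                  - ((nd : ℝ)⁻¹ • ∑ k : Fin nd, x (Fin.castLE hNd.le k)) ⬝ᵥ β))
            + αd)
        * Real.exp
          ((x j ⬝ᵥ β
              + γd * (((nd : ℝ)⁻¹ * ∑ k : Fin nd, y (Fin.castLE hNd.le k) ω)
                  - ((nd : ℝ)⁻¹ • ∑ k : Fin nd, x (Fin.castLE hNd.le k)) ⬝ᵥ β))
            + αd)
      = Real.exp (x i ⬝ᵥ β + x j ⬝ᵥ β + 2 * αd) * Real.exp (t * Z ω) := by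
    intro ω
    rw [← Real.exp_add, ← Real.exp_add]
    congr 1
    have hsx : ((nd : ℝ)⁻¹ • ∑ k : Fin nd, x (Fin.castLE hNd.le k)) ⬝ᵥ β
        = (nd : ℝ)⁻¹ * ∑ k : Fin nd, x (Fin.castLE hNd.le k) ⬝ᵥ β := by
      rw [smul_dotProduct, my_sum_dotProduct, smul_eq_mul]
    have hsy : ∑ k : Fin nd, y (Fin.castLE hNd.le k) ω
        = (∑ k : Fin nd, x (Fin.castLE hNd.le k) ⬝ᵥ β)
          + (nd : ℝ) * u ω + ∑ k : Fin nd, e (Fin.castLE hNd.le k) ω := by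
      simp only [hy]
      rw [Finset.sum_add_distrib, Finset.sum_add_distrib, Finset.sum_const,
        Finset.card_univ, Fintype.card_fin, nsmul_eq_mul]
    rw [hsx, hsy, hZ ω, ht]
    field_simp
    ring
  simp_rw [hC]
  rw [integral_const_mul, hmgf, ← Real.exp_add]
  congr 1
  rw [add_dotProduct]
  have hd : (0:ℝ) < σu2 + σe2 / nd := by
    have : (0:ℝ) < σe2 / nd := by positivity
    linarith
  subst hγ hα
  rw [ht]
  field_simp [hd.ne']
  ring
end

section
/- In the multi-area nested-error matrix model, for an area d and any x_{di}, x_{dj} ∈ ℝ^p, the vectors b_{di} = V_s^{-1}X_sQ_sx_{di} + σu² P_s Z_s m_d and b_{dj} = V_s^{-1}X_sQ_sx_{dj} + σu² P_s Z_s m_d satisfy (b_{di}+b_{dj})' V_s (b_{di}+b_{dj}) = (x_{di}+x_{dj})' Q_s (x_{di}+x_{dj}) + 4γ_d( σu² − γ_d x̄_{ds}' Q_s x̄_{ds} ), where γ_d = σu²/(σu² + σe²/n_d) and x̄_{ds} is the average of the covariate vectors of the sampled units of area d. -/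
open Matrix

set_option maxHeartbeats 1600000

private lemma dot_mulVec_left' {m n : Type*} [Fintype m] [Fintype n]
    (B : Matrix m n ℝ) (z : n → ℝ) (v : m → ℝ) :
    (B *ᵥ z) ⬝ᵥ v = z ⬝ᵥ (Bᵀ *ᵥ v) := by
  rw [dotProduct_comm, dotProduct_mulVec, dotProduct_comm, mulVec_transpose]

/-- In the multi-area nested-error matrix model,
`(b_{di}+b_{dj})' V_s (b_{di}+b_{dj})
  = (x_{di}+x_{dj})' Q_s (x_{di}+x_{dj}) + 4γ_d(σu² − γ_d x̄_{ds}' Q_s x̄_{ds})`. -/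
theorem quadratic_form_b_plus_b
    (D p : ℕ) (hD : 0 < D) (nds : Fin D → ℕ) (hnds : ∀ d, 1 ≤ nds d)
    (σu2 σe2 : ℝ) (hσu : 0 ≤ σu2) (hσe : 0 < σe2)
    (Xs : Matrix ((d : Fin D) × Fin (nds d)) (Fin p) ℝ)
    (Zs : Matrix ((d : Fin D) × Fin (nds d)) (Fin D) ℝ)
    (hZs : ∀ k d', Zs k d' = if k.1 = d' then 1 else 0)
    (Vs : Matrix ((d : Fin D) × Fin (nds d)) ((d : Fin D) × Fin (nds d)) ℝ)
    (hVs : Vs = σu2 • (Zs * Zsᵀ) + σe2 • (1 : Matrix _ _ ℝ))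
    (hXVX : IsUnit (Xsᵀ * Vs⁻¹ * Xs))
    (Qs : Matrix (Fin p) (Fin p) ℝ) (hQs : Qs = (Xsᵀ * Vs⁻¹ * Xs)⁻¹)
    (Ps : Matrix ((d : Fin D) × Fin (nds d)) ((d : Fin D) × Fin (nds d)) ℝ)
    (hPs : Ps = Vs⁻¹ - Vs⁻¹ * Xs * Qs * Xsᵀ * Vs⁻¹)
    (d : Fin D) (xdi xdj : Fin p → ℝ)
    (γd : ℝ) (hγ : γd = σu2 / (σu2 + σe2 / (nds d : ℝ)))
    (xbar : Fin p → ℝ)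
    (hxbar : xbar = ((nds d : ℝ))⁻¹ • ∑ k : Fin (nds d), Xs ⟨d, k⟩)
    (bdi bdj : (d : Fin D) × Fin (nds d) → ℝ)
    (hbdi : bdi = (Vs⁻¹ * Xs * Qs).mulVec xdi
        + σu2 • Ps.mulVec (Zs.mulVec (Pi.single d 1)))
    (hbdj : bdj = (Vs⁻¹ * Xs * Qs).mulVec xdj
        + σu2 • Ps.mulVec (Zs.mulVec (Pi.single d 1))) :
    (bdi + bdj) ⬝ᵥ Vs.mulVec (bdi + bdj)
      = (xdi + xdj) ⬝ᵥ Qs.mulVec (xdi + xdj)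
          + 4 * γd * (σu2 - γd * (xbar ⬝ᵥ Qs.mulVec xbar)) := by
  classical
  set nR : ℝ := (nds d : ℝ) with hnR
  have nRpos : (0 : ℝ) < nR := by
    have := hnds d
    simp only [hnR]
    exact_mod_cast Nat.lt_of_lt_of_le Nat.zero_lt_one this
  set c : ℝ := σu2 * nR + σe2 with hcdef
  have hc : 0 < c := by
    have h1 : 0 ≤ σu2 * nR := mul_nonneg hσu nRpos.le
    simp only [hcdef]; linarith
  -- positive definiteness of Vs
  have hVpd : Vs.PosDef := by
    rw [posDef_iff_dotProduct_mulVec]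
    constructor
    · show Vsᴴ = Vs
      rw [hVs]
      simp [conjTranspose_add, conjTranspose_smul, conjTranspose_mul,
        ← conjTranspose_eq_transpose_of_trivial]
    · intro x hx
      rw [hVs, add_mulVec, smul_mulVec, smul_mulVec, one_mulVec,
        dotProduct_add, dotProduct_smul, dotProduct_smul, star_trivial]
      have h1 : x ⬝ᵥ (Zs * Zsᵀ) *ᵥ x = (Zsᵀ *ᵥ x) ⬝ᵥ (Zsᵀ *ᵥ x) := by
        rw [← mulVec_mulVec, dotProduct_mulVec, ← mulVec_transpose]
      have h2 : (0 : ℝ) < x ⬝ᵥ x :=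
        lt_of_le_of_ne (Finset.sum_nonneg fun i _ => mul_self_nonneg (x i))
          (Ne.symm fun h => hx (dotProduct_self_eq_zero.mp h))
      have h3 : (0 : ℝ) ≤ (Zsᵀ *ᵥ x) ⬝ᵥ (Zsᵀ *ᵥ x) :=
        Finset.sum_nonneg fun i _ => mul_self_nonneg _
      rw [h1]
      simp only [smul_eq_mul]
      have := mul_nonneg hσu h3
      nlinarith
  have hVdet : IsUnit Vs.det := (isUnit_iff_isUnit_det _).mp hVpd.isUnit
  have hVVi : Vs * Vs⁻¹ = 1 := mul_nonsing_inv _ hVdet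
  have hViV : Vs⁻¹ * Vs = 1 := nonsing_inv_mul _ hVdet
  have hVsymT : Vsᵀ = Vs := by
    rw [hVs]; simp [transpose_add, transpose_smul, transpose_mul]
  have hVisym : Vs⁻¹ᵀ = Vs⁻¹ := by rw [transpose_nonsing_inv, hVsymT]
  -- Qs facts
  have hMdet : IsUnit (Xsᵀ * Vs⁻¹ * Xs).det := (isUnit_iff_isUnit_det _).mp hXVX
  have hMQ : Xsᵀ * Vs⁻¹ * Xs * Qs = 1 := by rw [hQs]; exact mul_nonsing_inv _ hMdet
  have hMsym : (Xsᵀ * Vs⁻¹ * Xs)ᵀ = Xsᵀ * Vs⁻¹ * Xs := by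
    simp [transpose_mul, hVisym, Matrix.mul_assoc]
  have hQsym : Qsᵀ = Qs := by rw [hQs, transpose_nonsing_inv, hMsym]
  -- the indicator vector w
  set w : (d : Fin D) × Fin (nds d) → ℝ := Zs *ᵥ (Pi.single d 1) with hwdef
  have hwfun : w = fun k => if k.1 = d then 1 else 0 := by
    rw [hwdef, mulVec_single]; ext k; simp [hZs]
  have hZtw : Zsᵀ *ᵥ w = nR • (Pi.single d 1 : Fin D → ℝ) := by
    rw [hwfun]; ext d'
    simp only [mulVec, dotProduct, transpose_apply, Pi.smul_apply]
    rw [← Finset.univ_sigma_univ, Finset.sum_sigma]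
    simp only [hZs]
    rcases eq_or_ne d' d with rfl | hne
    · simp [Pi.single_apply, hnR]
    · simp [Pi.single_apply, hne.symm, Finset.sum_ite_eq]
  have hZZw : (Zs * Zsᵀ) *ᵥ w = nR • w := by
    rw [← mulVec_mulVec, hZtw, mulVec_smul, hwdef]
  have hww : w ⬝ᵥ w = nR := by
    rw [hwfun]
    simp only [dotProduct]
    rw [← Finset.univ_sigma_univ, Finset.sum_sigma]
    simp [Finset.sum_ite_eq, hnR]
  have hXtw : Xsᵀ *ᵥ w = nR • xbar := by
    rw [hwfun, hxbar]; ext j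
    simp only [mulVec, dotProduct, transpose_apply, Pi.smul_apply, Finset.sum_apply]
    rw [← Finset.univ_sigma_univ, Finset.sum_sigma]
    have : ∀ a : Fin D, ∑ b : Fin (nds a),
        Xs ⟨a, b⟩ j * (if (⟨a, b⟩ : (d : Fin D) × Fin (nds d)).1 = d then (1:ℝ) else 0)
        = if a = d then ∑ b : Fin (nds a), Xs ⟨a, b⟩ j else 0 := by
      intro a
      rcases eq_or_ne a d with rfl | h
      · simp
      · simp [h]
    rw [Finset.sum_congr rfl fun a _ => this a]
    rw [Finset.sum_ite_eq' Finset.univ d fun a => ∑ b : Fin (nds a), Xs ⟨a, b⟩ j]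
    simp only [Finset.mem_univ, if_true]
    rw [smul_smul, mul_inv_cancel₀ nRpos.ne', one_smul]
  have hVw : Vs *ᵥ w = c • w := by
    rw [hVs, add_mulVec, smul_mulVec, smul_mulVec, one_mulVec, hZZw]
    ext k
    simp only [Pi.add_apply, Pi.smul_apply, smul_eq_mul, hcdef]
    ring
  have hViw : Vs⁻¹ *ᵥ w = c⁻¹ • w := by
    have h0 : Vs⁻¹ *ᵥ (Vs *ᵥ w) = w := by rw [mulVec_mulVec, hViV, one_mulVec]
    have h1 : c • (Vs⁻¹ *ᵥ w) = w := by rw [← mulVec_smul, ← hVw, h0]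
    calc Vs⁻¹ *ᵥ w = (c⁻¹ * c) • (Vs⁻¹ *ᵥ w) := by
          rw [inv_mul_cancel₀ hc.ne', one_smul]
      _ = c⁻¹ • w := by rw [mul_smul, h1]
  -- the matrix A
  set A : Matrix ((d : Fin D) × Fin (nds d)) (Fin p) ℝ := Vs⁻¹ * Xs * Qs with hAdef
  have hVA : Vs * A = Xs * Qs := by
    rw [hAdef, ← Matrix.mul_assoc, ← Matrix.mul_assoc, hVVi, Matrix.one_mul]
  have hAt : Aᵀ = Qs * (Xsᵀ * Vs⁻¹) := by
    rw [hAdef]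
    simp [transpose_mul, hQsym, hVisym, Matrix.mul_assoc]
  have hAtw : Aᵀ *ᵥ w = (c⁻¹ * nR) • (Qs *ᵥ xbar) := by
    rw [hAt, ← mulVec_mulVec, ← mulVec_mulVec, hViw, mulVec_smul, hXtw,
      mulVec_smul, mulVec_smul, smul_smul]
  have hAtXQ : Aᵀ * (Xs * Qs) = Qs := by
    rw [hAt]
    calc Qs * (Xsᵀ * Vs⁻¹) * (Xs * Qs)
        = Qs * (Xsᵀ * Vs⁻¹ * Xs * Qs) := by simp only [Matrix.mul_assoc]
      _ = Qs := by rw [hMQ, Matrix.mul_one]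
  have hXQtw : (Xs * Qs)ᵀ *ᵥ w = nR • (Qs *ᵥ xbar) := by
    rw [transpose_mul, hQsym, ← mulVec_mulVec, hXtw, mulVec_smul]
  -- Ps applied to w
  have hPw : Ps *ᵥ w = c⁻¹ • w - (c⁻¹ * nR) • (A *ᵥ xbar) := by
    have e1 : (Xsᵀ * Vs⁻¹) *ᵥ w = c⁻¹ • (nR • xbar) := by
      rw [← mulVec_mulVec, hViw, mulVec_smul, hXtw]
    have e2 : (A * Xsᵀ * Vs⁻¹) *ᵥ w = (c⁻¹ * nR) • (A *ᵥ xbar) := by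
      rw [Matrix.mul_assoc, ← mulVec_mulVec, e1]
      simp only [mulVec_smul, smul_smul]
    rw [hPs, sub_mulVec, hViw, e2]
  -- abbreviations for the scalar computation
  set a : ℝ := 2 * σu2 * c⁻¹ * nR with hadef
  set t : ℝ := 2 * σu2 * c⁻¹ with htdef
  set y : Fin p → ℝ := (xdi + xdj) - a • xbar with hydef
  have hb : bdi + bdj = A *ᵥ y + t • w := by
    rw [hbdi, hbdj, hydef]
    ext k
    simp only [Pi.add_apply, Pi.smul_apply, Pi.sub_apply, mulVec_sub, mulVec_smul,
      mulVec_add, hPw, smul_eq_mul, hadef, htdef, hAdef]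
    ring
  have hVb : Vs *ᵥ (bdi + bdj) = (Xs * Qs) *ᵥ y + (t * c) • w := by
    rw [hb, mulVec_add, mulVec_smul, hVw, mulVec_mulVec, hVA, smul_smul, mul_comm]
  -- scalar abbreviations
  set q : ℝ := xbar ⬝ᵥ Qs *ᵥ xbar with hqdef
  set s : ℝ := (xdi + xdj) ⬝ᵥ Qs *ᵥ xbar with hsdef
  set r : ℝ := (xdi + xdj) ⬝ᵥ Qs *ᵥ (xdi + xdj) with hrdef
  have hQdot : ∀ u v : Fin p → ℝ, u ⬝ᵥ Qs *ᵥ v = v ⬝ᵥ Qs *ᵥ u := by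
    intro u v
    have h := dot_mulVec_left' Qs u v
    rw [hQsym] at h
    rw [← h, dotProduct_comm]
  -- the four dot-product terms
  have hyQy : y ⬝ᵥ Qs *ᵥ y = r - 2 * a * s + a ^ 2 * q := by
    rw [hydef, sub_dotProduct, smul_dotProduct, mulVec_sub, mulVec_smul,
      dotProduct_sub, dotProduct_sub, dotProduct_smul, dotProduct_smul]
    have : xbar ⬝ᵥ Qs *ᵥ (xdi + xdj) = s := by rw [hQdot]; 
    rw [this]
    simp only [smul_eq_mul, hsdef, hqdef, hrdef]
    ring
  have hyQxbar : y ⬝ᵥ Qs *ᵥ xbar = s - a * q := by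
    rw [hydef, sub_dotProduct, smul_dotProduct]
    simp only [smul_eq_mul, hsdef, hqdef]
  have T11 : (A *ᵥ y) ⬝ᵥ ((Xs * Qs) *ᵥ y) = r - 2 * a * s + a ^ 2 * q := by
    rw [dot_mulVec_left', mulVec_mulVec, hAtXQ, hyQy]
  have T12 : (A *ᵥ y) ⬝ᵥ w = (c⁻¹ * nR) * (s - a * q) := by
    rw [dot_mulVec_left', hAtw, dotProduct_smul, smul_eq_mul, hyQxbar]
  have T21 : w ⬝ᵥ ((Xs * Qs) *ᵥ y) = nR * (s - a * q) := by
    rw [dotProduct_mulVec, ← mulVec_transpose, hXQtw, smul_dotProduct, smul_eq_mul,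
      dotProduct_comm, hyQxbar]
  -- finishing scalar identities
  have hγ' : γd = σu2 * nR / c := by
    have hpos : (0 : ℝ) < σu2 + σe2 / nR := by
      have := div_pos hσe nRpos; linarith
    rw [hγ, div_eq_div_iff hpos.ne' hc.ne', hcdef]
    field_simp
  calc (bdi + bdj) ⬝ᵥ Vs *ᵥ (bdi + bdj)
      = (A *ᵥ y + t • w) ⬝ᵥ ((Xs * Qs) *ᵥ y + (t * c) • w) := by rw [hVb, hb]
    _ = (A *ᵥ y) ⬝ᵥ ((Xs * Qs) *ᵥ y) + (t * c) * ((A *ᵥ y) ⬝ᵥ w)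
        + t * (w ⬝ᵥ ((Xs * Qs) *ᵥ y)) + t * ((t * c) * (w ⬝ᵥ w)) := by
        simp only [add_dotProduct, dotProduct_add, smul_dotProduct, dotProduct_smul,
          smul_eq_mul]
        ring
    _ = (r - 2 * a * s + a ^ 2 * q) + (t * c) * ((c⁻¹ * nR) * (s - a * q))
        + t * (nR * (s - a * q)) + t * ((t * c) * nR) := by
        rw [T11, T12, T21, hww]
    _ = r + 4 * γd * (σu2 - γd * q) := by
        rw [hγ', hadef, htdef]
        field_simp
        ring
end

section
/- In the multi-area nested-error matrix model, for an area d, a sampled unit i of area d with standard basis vector a_{di} ∈ ℝ^n (the indicator of the position of unit i in the stacked sample vector) and covariate x_{di} (the corresponding row of X_s), and any x_{dj} ∈ ℝ^p with b_{dj} = V_s^{-1}X_sQ_sx_{dj} + σu² P_s Z_s m_d, it holds that (a_{di}+b_{dj})' V_s (a_{di}+b_{dj}) = σe² + σu²(3 + γ_d) + 2(x_{dj} − γ_d x̄_{ds})' Q_s x_{di} + x_{dj}' Q_s x_{dj} − γ_d² x̄_{ds}' Q_s x̄_{ds}, where γ_d = σu²/(σu² + σe²/n_d) and x̄_{ds}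 is the average of the covariate vectors of the sampled units of area d. -/
open Matrix

private lemma dot_symm {n : Type*} [Fintype n] (M : Matrix n n ℝ) (hM : Mᵀ = M)
    (v w : n → ℝ) : v ⬝ᵥ (M *ᵥ w) = (M *ᵥ v) ⬝ᵥ w := by
  rw [Matrix.dotProduct_mulVec, ← Matrix.mulVec_transpose, hM]

/-- In the multi-area nested-error matrix model, for a sampled unit `i` of area `d` with
indicator vector `a_{di}` and any `x_{dj}`,
`(a_{di}+b_{dj})' V_s (a_{di}+b_{dj}) = σe² + σu²(3+γ_d) + 2(x_{dj} − γ_d x̄_{ds})' Q_s x_{di}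
  + x_{dj}' Q_s x_{dj} − γ_d² x̄_{ds}' Q_s x̄_{ds}`. -/
theorem quadratic_form_a_plus_b
    (D p : ℕ) (hD : 0 < D) (nds : Fin D → ℕ) (hnds : ∀ d, 1 ≤ nds d)
    (σu2 σe2 : ℝ) (hσu : 0 ≤ σu2) (hσe : 0 < σe2)
    (Xs : Matrix ((d : Fin D) × Fin (nds d)) (Fin p) ℝ)
    (Zs : Matrix ((d : Fin D) × Fin (nds d)) (Fin D) ℝ)
    (hZs : ∀ k d', Zs k d' = if k.1 = d' then 1 else 0)
    (Vs : Matrix ((d : Fin D) × Fin (nds d)) ((d : Fin D) × Fin (nds d)) ℝ)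
    (hVs : Vs = σu2 • (Zs * Zsᵀ) + σe2 • (1 : Matrix _ _ ℝ))
    (hXVX : IsUnit (Xsᵀ * Vs⁻¹ * Xs))
    (Qs : Matrix (Fin p) (Fin p) ℝ) (hQs : Qs = (Xsᵀ * Vs⁻¹ * Xs)⁻¹)
    (Ps : Matrix ((d : Fin D) × Fin (nds d)) ((d : Fin D) × Fin (nds d)) ℝ)
    (hPs : Ps = Vs⁻¹ - Vs⁻¹ * Xs * Qs * Xsᵀ * Vs⁻¹)
    (d : Fin D) (i : Fin (nds d)) (xdj : Fin p → ℝ)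
    (γd : ℝ) (hγ : γd = σu2 / (σu2 + σe2 / (nds d : ℝ)))
    (xbar : Fin p → ℝ)
    (hxbar : xbar = ((nds d : ℝ))⁻¹ • ∑ k : Fin (nds d), Xs ⟨d, k⟩)
    (adi : (d : Fin D) × Fin (nds d) → ℝ)
    (hadi : adi = Pi.single (⟨d, i⟩ : (d : Fin D) × Fin (nds d)) (1 : ℝ))
    (bdj : (d : Fin D) × Fin (nds d) → ℝ)
    (hbdj : bdj = (Vs⁻¹ * Xs * Qs).mulVec xdj
        + σu2 • Ps.mulVec (Zs.mulVec (Pi.single d 1))) :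
    (adi + bdj) ⬝ᵥ Vs.mulVec (adi + bdj)
      = σe2 + σu2 * (3 + γd)
          + 2 * ((xdj - γd • xbar) ⬝ᵥ Qs.mulVec (Xs ⟨d, i⟩))
          + xdj ⬝ᵥ Qs.mulVec xdj - γd ^ 2 * (xbar ⬝ᵥ Qs.mulVec xbar) := by
  have hnpos : (0:ℝ) < (nds d : ℝ) := by exact_mod_cast hnds d
  have hnne : ((nds d : ℝ)) ≠ 0 := hnpos.ne'
  set u : (d : Fin D) × Fin (nds d) → ℝ := Zs.mulVec (Pi.single d 1) with hudef
  have hu' : ∀ k, u k = if k.1 = d then 1 else 0 := by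
    intro k
    simp only [hudef, Matrix.mulVec_single, mul_one, MulOpposite.op_one, one_smul, Matrix.col_apply]
    exact hZs k d
  -- entries of Zs * Zsᵀ
  have hZZ : ∀ k l, (Zs * Zsᵀ) k l = if k.1 = l.1 then (1:ℝ) else 0 := by
    intro k l
    simp only [Matrix.mul_apply, Matrix.transpose_apply, hZs]
    have key : ∀ d' : Fin D, (if k.1 = d' then (1:ℝ) else 0) * (if l.1 = d' then 1 else 0)
        = if d' = k.1 then (if l.1 = d' then (1:ℝ) else 0) else 0 := by
      intro d'
      by_cases h1 : k.1 = d'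
      · simp [h1]
      · simp [h1, Ne.symm h1]
    rw [Finset.sum_congr rfl fun d' _ => key d', Fintype.sum_ite_eq']
    by_cases h : k.1 = l.1
    · simp [h]
    · rw [if_neg h, if_neg fun hh => h hh.symm]
  -- summing an area indicator
  have hsum_ind : ∀ (a : Fin D) (f : ((d' : Fin D) × Fin (nds d')) → ℝ),
      (∑ l : (d' : Fin D) × Fin (nds d'), (if l.1 = a then (1:ℝ) else 0) * f l)
        = ∑ j : Fin (nds a), f ⟨a, j⟩ := by
    intro a f
    rw [← Finset.univ_sigma_univ, Finset.sum_sigma]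
    rw [Finset.sum_eq_single a]
    · simp
    · intro b _ hb; simp [hb]
    · intro h; exact absurd (Finset.mem_univ a) h
  have huu : u ⬝ᵥ u = (nds d : ℝ) := by
    have e : u ⬝ᵥ u = ∑ l, (if l.1 = d then (1:ℝ) else 0) * u l :=
      Finset.sum_congr rfl fun l _ => by rw [hu' l]
    rw [e, hsum_ind d u]
    simp [hu']
  have hXtu : Xsᵀ *ᵥ u = (nds d : ℝ) • xbar := by
    funext j
    have e : (Xsᵀ *ᵥ u) j = ∑ l : (d' : Fin D) × Fin (nds d'),
        (if l.1 = d then (1:ℝ) else 0) * Xs l j := by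
      simp only [Matrix.mulVec, dotProduct, Matrix.transpose_apply]
      exact Finset.sum_congr rfl fun l _ => by rw [hu' l, mul_comm]
    rw [e, hsum_ind d (fun l => Xs l j)]
    simp only [hxbar, Pi.smul_apply, smul_eq_mul, Finset.sum_apply]
    rw [← mul_assoc, mul_inv_cancel₀ hnne, one_mul]
  have hZZu : (Zs * Zsᵀ) *ᵥ u = (nds d : ℝ) • u := by
    funext k
    have e : ((Zs * Zsᵀ) *ᵥ u) k = ∑ l, (if l.1 = k.1 then (1:ℝ) else 0) * u l := by
      simp only [Matrix.mulVec, dotProduct]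
      refine Finset.sum_congr rfl fun l _ => ?_
      rw [hZZ k l]
      by_cases h : k.1 = l.1
      · simp [h]
      · rw [if_neg h, if_neg fun hh => h hh.symm]
    rw [e, hsum_ind k.1 u]
    by_cases h : k.1 = d
    · have h1 : ∀ j : Fin (nds k.1), u ⟨k.1, j⟩ = 1 := fun j => by
        rw [hu']; exact if_pos h
      have h2 : u k = 1 := by rw [hu' k]; exact if_pos h
      rw [Pi.smul_apply, h2]
      simp only [h1, Finset.sum_const, Finset.card_univ, Fintype.card_fin, nsmul_eq_mul,
        mul_one, smul_eq_mul]
      rw [h]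
    · have h1 : ∀ j : Fin (nds k.1), u ⟨k.1, j⟩ = 0 := fun j => by
        rw [hu']; exact if_neg h
      have h2 : u k = 0 := by rw [hu' k]; exact if_neg h
      rw [Pi.smul_apply, h2]
      simp [h1]
  have hVmv : ∀ v, Vs *ᵥ v = σu2 • ((Zs * Zsᵀ) *ᵥ v) + σe2 • v := by
    intro v
    rw [hVs, Matrix.add_mulVec, Matrix.smul_mulVec, Matrix.smul_mulVec,
      Matrix.one_mulVec]
  set lam : ℝ := σu2 * (nds d : ℝ) + σe2 with hlam
  have hlampos : 0 < lam := add_pos_of_nonneg_of_pos (mul_nonneg hσu hnpos.le) hσe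
  have hlamne : lam ≠ 0 := hlampos.ne'
  have hVu : Vs *ᵥ u = lam • u := by
    rw [hVmv, hZZu, smul_smul]
    funext k
    simp only [Pi.add_apply, Pi.smul_apply, smul_eq_mul, hlam]
    ring
  have hγ' : γd = σu2 * (nds d : ℝ) / lam := by
    rw [hγ, hlam]
    rw [div_eq_div_iff (by positivity) (by positivity)]
    field_simp
  have hγσ : σu2 * (lam⁻¹ * (nds d : ℝ)) = γd := by
    rw [hγ']; field_simp
  -- positive definiteness of Vs
  have hsymZZ : ∀ x : ((d' : Fin D) × Fin (nds d')) → ℝ,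
      x ⬝ᵥ ((Zs * Zsᵀ) *ᵥ x) = (Zsᵀ *ᵥ x) ⬝ᵥ (Zsᵀ *ᵥ x) := by
    intro x
    rw [← Matrix.mulVec_mulVec, Matrix.dotProduct_mulVec, ← Matrix.mulVec_transpose]
  have hPD : Vs.PosDef := by
    rw [hVs, Matrix.posDef_iff_dotProduct_mulVec]
    constructor
    · show _ᴴ = _
      rw [Matrix.conjTranspose_eq_transpose_of_trivial]
      simp [Matrix.transpose_add, Matrix.transpose_smul, Matrix.transpose_mul,
        Matrix.transpose_transpose]
    · intro x hx
      simp only [star_trivial, Matrix.add_mulVec, Matrix.smul_mulVec, Matrix.one_mulVec,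
        dotProduct_add, dotProduct_smul, smul_eq_mul]
      have h1 : 0 ≤ x ⬝ᵥ ((Zs * Zsᵀ) *ᵥ x) := by
        rw [hsymZZ x]
        exact Finset.sum_nonneg fun k _ => mul_self_nonneg _
      have h2 : 0 < x ⬝ᵥ x := by
        rcases lt_or_eq_of_le (Finset.sum_nonneg fun k _ => mul_self_nonneg (x k)) with h | h
        · exact h
        · exact absurd (dotProduct_self_eq_zero.mp h.symm) hx
      exact add_pos_of_nonneg_of_pos (mul_nonneg hσu h1) (mul_pos hσe h2)
  have hdet : IsUnit Vs.det := (Matrix.isUnit_iff_isUnit_det _).mp hPD.isUnit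
  have hVV : Vs * Vs⁻¹ = 1 := Matrix.mul_nonsing_inv _ hdet
  have hVV' : Vs⁻¹ * Vs = 1 := Matrix.nonsing_inv_mul _ hdet
  have hVsym : Vsᵀ = Vs := by
    rw [← Matrix.conjTranspose_eq_transpose_of_trivial]
    exact hPD.1
  have hVisym : Vs⁻¹ᵀ = Vs⁻¹ := by rw [Matrix.transpose_nonsing_inv, hVsym]
  have hViu : Vs⁻¹ *ᵥ u = lam⁻¹ • u := by
    have h : Vs⁻¹ *ᵥ (Vs *ᵥ u) = u := by
      rw [Matrix.mulVec_mulVec, hVV', Matrix.one_mulVec]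
    rw [hVu, Matrix.mulVec_smul] at h
    have h2 : lam⁻¹ • (lam • (Vs⁻¹ *ᵥ u)) = lam⁻¹ • u := by rw [h]
    rwa [smul_smul, inv_mul_cancel₀ hlamne, one_smul] at h2
  have hdetQ : IsUnit (Xsᵀ * Vs⁻¹ * Xs).det := (Matrix.isUnit_iff_isUnit_det _).mp hXVX
  have hQ1 : (Xsᵀ * Vs⁻¹ * Xs) * Qs = 1 := by rw [hQs]; exact Matrix.mul_nonsing_inv _ hdetQ
  have hQ2 : Qs * (Xsᵀ * Vs⁻¹ * Xs) = 1 := by rw [hQs]; exact Matrix.nonsing_inv_mul _ hdetQ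
  have hQsym : Qsᵀ = Qs := by
    rw [hQs, Matrix.transpose_nonsing_inv]
    congr 1
    simp [Matrix.transpose_mul, Matrix.mul_assoc, hVisym]
  have hQdot : ∀ v w, v ⬝ᵥ (Qs *ᵥ w) = w ⬝ᵥ (Qs *ᵥ v) := fun v w => by
    rw [dot_symm Qs hQsym, dotProduct_comm]
  -- key dot products
  have hub_key : ∀ w, u ⬝ᵥ ((Vs⁻¹ * Xs * Qs) *ᵥ w)
      = lam⁻¹ * (nds d : ℝ) * (xbar ⬝ᵥ (Qs *ᵥ w)) := by
    intro w
    rw [show Vs⁻¹ * Xs * Qs = Vs⁻¹ * (Xs * Qs) from Matrix.mul_assoc _ _ _,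
      ← Matrix.mulVec_mulVec, dot_symm _ hVisym, hViu, smul_dotProduct, smul_eq_mul,
      ← Matrix.mulVec_mulVec, Matrix.dotProduct_mulVec, ← Matrix.mulVec_transpose, hXtu,
      smul_dotProduct, smul_eq_mul]
    ring
  have hXtb : Xsᵀ *ᵥ bdj = xdj := by
    have e1 : Xsᵀ * (Vs⁻¹ * Xs * Qs) = 1 := by
      rw [← Matrix.mul_assoc, ← Matrix.mul_assoc]
      exact hQ1
    have e2 : Xsᵀ * Ps = 0 := by
      rw [hPs, Matrix.mul_sub]
      rw [show Xsᵀ * (Vs⁻¹ * Xs * Qs * Xsᵀ * Vs⁻¹)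
          = ((Xsᵀ * Vs⁻¹ * Xs) * Qs) * (Xsᵀ * Vs⁻¹) by simp only [Matrix.mul_assoc]]
      rw [hQ1, Matrix.one_mul, sub_self]
    rw [hbdj, Matrix.mulVec_add, Matrix.mulVec_smul, Matrix.mulVec_mulVec,
      Matrix.mulVec_mulVec, e1, e2, Matrix.one_mulVec, Matrix.zero_mulVec, smul_zero, add_zero]
  have hbX : ∀ w, bdj ⬝ᵥ (Xs *ᵥ w) = xdj ⬝ᵥ w := by
    intro w
    rw [Matrix.dotProduct_mulVec, ← Matrix.mulVec_transpose, hXtb]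
  -- Vs *ᵥ adi
  have hVa : Vs *ᵥ adi = σu2 • u + σe2 • adi := by
    rw [hVmv]
    have e : (Zs * Zsᵀ) *ᵥ adi = u := by
      funext k
      simp only [hadi, Matrix.mulVec_single, mul_one, MulOpposite.op_one, one_smul, Matrix.col_apply, hZZ, hu']
    rw [e]
  -- Vs *ᵥ bdj
  have hXQXu : (Vs⁻¹ * Xs * Qs * Xsᵀ * Vs⁻¹) *ᵥ u
      = (lam⁻¹ * (nds d : ℝ)) • ((Vs⁻¹ * Xs * Qs) *ᵥ xbar) := by
    rw [show Vs⁻¹ * Xs * Qs * Xsᵀ * Vs⁻¹ = (Vs⁻¹ * Xs * Qs) * (Xsᵀ * Vs⁻¹) by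
      simp only [Matrix.mul_assoc]]
    rw [← Matrix.mulVec_mulVec]
    rw [show (Xsᵀ * Vs⁻¹) *ᵥ u = (lam⁻¹ * (nds d : ℝ)) • xbar by
      rw [← Matrix.mulVec_mulVec, hViu, Matrix.mulVec_smul, hXtu, smul_smul]]
    rw [Matrix.mulVec_smul]
  have hPu : Ps *ᵥ u = lam⁻¹ • u - (lam⁻¹ * (nds d : ℝ)) • ((Vs⁻¹ * Xs * Qs) *ᵥ xbar) := by
    rw [hPs, Matrix.sub_mulVec, hViu, hXQXu]
  have hVb : Vs *ᵥ bdj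
      = Xs *ᵥ (Qs *ᵥ xdj) + σu2 • u - γd • (Xs *ᵥ (Qs *ᵥ xbar)) := by
    have e1 : Vs * (Vs⁻¹ * Xs * Qs) = Xs * Qs := by
      rw [← Matrix.mul_assoc, ← Matrix.mul_assoc, hVV, Matrix.one_mul]
    have eVP : Vs *ᵥ (Ps *ᵥ u) = u - (lam⁻¹ * (nds d : ℝ)) • (Xs *ᵥ (Qs *ᵥ xbar)) := by
      rw [hPu, Matrix.mulVec_sub, Matrix.mulVec_smul, Matrix.mulVec_smul, hVu, smul_smul,
        inv_mul_cancel₀ hlamne, one_smul, Matrix.mulVec_mulVec, e1, ← Matrix.mulVec_mulVec]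
    rw [hbdj, Matrix.mulVec_add, Matrix.mulVec_smul, Matrix.mulVec_mulVec, e1, eVP,
      smul_sub, smul_smul, hγσ, ← Matrix.mulVec_mulVec]
    module
  -- bdj ⬝ᵥ u
  have hbu : bdj ⬝ᵥ u = lam⁻¹ * (nds d : ℝ) * (xbar ⬝ᵥ (Qs *ᵥ xdj))
      + σu2 * (lam⁻¹ * (nds d : ℝ)
        - (lam⁻¹ * (nds d : ℝ))^2 * (xbar ⬝ᵥ (Qs *ᵥ xbar))) := by
    have e1 : (Ps *ᵥ u) ⬝ᵥ u = lam⁻¹ * (nds d : ℝ)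
        - (lam⁻¹ * (nds d : ℝ))^2 * (xbar ⬝ᵥ (Qs *ᵥ xbar)) := by
      rw [hPu, sub_dotProduct, smul_dotProduct, smul_dotProduct,
        huu, dotProduct_comm, hub_key xbar]
      simp only [smul_eq_mul]
      ring
    rw [hbdj, add_dotProduct, smul_dotProduct,
      dotProduct_comm _ u, hub_key xdj, e1, smul_eq_mul]
  -- assembling
  have hadotu : adi ⬝ᵥ u = 1 := by
    rw [hadi, single_dotProduct, one_mul, hu', if_pos rfl]
  have hadota : adi ⬝ᵥ adi = 1 := by
    rw [hadi, single_dotProduct, one_mul, Pi.single_eq_same]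
  have hadotX : ∀ w, adi ⬝ᵥ (Xs *ᵥ w) = Xs ⟨d, i⟩ ⬝ᵥ w := by
    intro w
    rw [hadi, single_dotProduct, one_mul]
    rfl
  have haVa : adi ⬝ᵥ (Vs *ᵥ adi) = σu2 + σe2 := by
    rw [hVa, dotProduct_add, dotProduct_smul, dotProduct_smul, hadotu, hadota]
    simp
  have haVb : adi ⬝ᵥ (Vs *ᵥ bdj)
      = Xs ⟨d, i⟩ ⬝ᵥ (Qs *ᵥ xdj) + σu2 - γd * (Xs ⟨d, i⟩ ⬝ᵥ (Qs *ᵥ xbar)) := by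
    rw [hVb, dotProduct_sub, dotProduct_add, dotProduct_smul, dotProduct_smul,
      hadotu, hadotX, hadotX]
    simp only [smul_eq_mul, mul_one]
  have hbVa : bdj ⬝ᵥ (Vs *ᵥ adi) = adi ⬝ᵥ (Vs *ᵥ bdj) := by
    rw [dot_symm _ hVsym, dotProduct_comm]
  have hbVb : bdj ⬝ᵥ (Vs *ᵥ bdj)
      = xdj ⬝ᵥ (Qs *ᵥ xdj) + σu2 * (bdj ⬝ᵥ u) - γd * (xdj ⬝ᵥ (Qs *ᵥ xbar)) := by
    rw [hVb, dotProduct_sub, dotProduct_add, dotProduct_smul, dotProduct_smul,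
      hbX, hbX]
    simp only [smul_eq_mul]
  rw [Matrix.mulVec_add, dotProduct_add, add_dotProduct, add_dotProduct,
    haVa, haVb, hbVa, haVb, hbVb, hbu]
  rw [sub_dotProduct, smul_dotProduct]
  rw [hQdot (Xs ⟨d, i⟩) xdj, hQdot (Xs ⟨d, i⟩) xbar, hQdot xdj xbar]
  simp only [smul_eq_mul]
  linear_combination (xbar ⬝ᵥ Qs *ᵥ xdj + σu2
    - (σu2 * (lam⁻¹ * (nds d : ℝ)) + γd) * (xbar ⬝ᵥ Qs *ᵥ xbar)) * hγσ
end

section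
/- In the multi-area nested-error matrix model, for an area d, a sampled unit i of area d with standard basis vector a_{di} ∈ ℝ^n and covariate x_{di} (the corresponding row of X_s), and any x_{dj} ∈ ℝ^p with b_{dj} = V_s^{-1}X_sQ_sx_{dj} + σu² P_s Z_s m_d, the following two identities hold: (1) a_{di}' V_s a_{di} = σu² + σe²; (2) b_{dj}' V_s a_{di} = σu² + (x_{dj} − γ_d x̄_{ds})' Q_s x_{di}, where γ_d = σu²/(σu² + σe²/n_d) and x̄_{ds} is the average of the covariate vectors of the sampled units of area d. -/
open Matrix

lemma helper_mv_dot_mv {m n k : Type*} [Fintype m] [Fintype n] [Fintype k]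
    (A : Matrix m n ℝ) (B : Matrix m k ℝ) (x : n → ℝ) (y : k → ℝ) :
    (A *ᵥ x) ⬝ᵥ (B *ᵥ y) = x ⬝ᵥ ((Aᵀ * B) *ᵥ y) := by
  rw [dotProduct_mulVec, dotProduct_mulVec, ← vecMul_vecMul, ← vecMul_transpose]

lemma helper_dot_mv {m n : Type*} [Fintype m] [Fintype n]
    (A : Matrix m n ℝ) (v : m → ℝ) (w : n → ℝ) :
    v ⬝ᵥ (A *ᵥ w) = (Aᵀ *ᵥ v) ⬝ᵥ w := by
  rw [dotProduct_mulVec, mulVec_transpose]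

set_option maxHeartbeats 1000000 in
/-- In the multi-area nested-error matrix model, for a sampled unit `i` of area `d` with
indicator vector `a_{di}` and any `x_{dj}`: (1) `a_{di}' V_s a_{di} = σu² + σe²`;
(2) `b_{dj}' V_s a_{di} = σu² + (x_{dj} − γ_d x̄_{ds})' Q_s x_{di}`. -/
theorem quadratic_forms_a_and_bVa
    (D p : ℕ) (hD : 0 < D) (nds : Fin D → ℕ) (hnds : ∀ d, 1 ≤ nds d)
    (σu2 σe2 : ℝ) (hσu : 0 ≤ σu2) (hσe : 0 < σe2)
    (Xs : Matrix ((d : Fin D) × Fin (nds d)) (Fin p) ℝ)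
    (Zs : Matrix ((d : Fin D) × Fin (nds d)) (Fin D) ℝ)
    (hZs : ∀ k d', Zs k d' = if k.1 = d' then 1 else 0)
    (Vs : Matrix ((d : Fin D) × Fin (nds d)) ((d : Fin D) × Fin (nds d)) ℝ)
    (hVs : Vs = σu2 • (Zs * Zsᵀ) + σe2 • (1 : Matrix _ _ ℝ))
    (hXVX : IsUnit (Xsᵀ * Vs⁻¹ * Xs))
    (Qs : Matrix (Fin p) (Fin p) ℝ) (hQs : Qs = (Xsᵀ * Vs⁻¹ * Xs)⁻¹)
    (Ps : Matrix ((d : Fin D) × Fin (nds d)) ((d : Fin D) × Fin (nds d)) ℝ)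
    (hPs : Ps = Vs⁻¹ - Vs⁻¹ * Xs * Qs * Xsᵀ * Vs⁻¹)
    (d : Fin D) (i : Fin (nds d)) (xdj : Fin p → ℝ)
    (γd : ℝ) (hγ : γd = σu2 / (σu2 + σe2 / (nds d : ℝ)))
    (xbar : Fin p → ℝ)
    (hxbar : xbar = ((nds d : ℝ))⁻¹ • ∑ k : Fin (nds d), Xs ⟨d, k⟩)
    (adi : (d : Fin D) × Fin (nds d) → ℝ)
    (hadi : adi = Pi.single (⟨d, i⟩ : (d : Fin D) × Fin (nds d)) (1 : ℝ))
    (bdj : (d : Fin D) × Fin (nds d) → ℝ)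
    (hbdj : bdj = (Vs⁻¹ * Xs * Qs).mulVec xdj
        + σu2 • Ps.mulVec (Zs.mulVec (Pi.single d 1))) :
    adi ⬝ᵥ Vs.mulVec adi = σu2 + σe2
    ∧ bdj ⬝ᵥ Vs.mulVec adi = σu2 + (xdj - γd • xbar) ⬝ᵥ Qs.mulVec (Xs ⟨d, i⟩) := by
  classical
  have hn : (0 : ℝ) < (nds d : ℝ) := by exact_mod_cast hnds d
  -- entries of Zs * Zsᵀ
  have hZZ : ∀ k l : (d : Fin D) × Fin (nds d),
      (Zs * Zsᵀ) k l = if k.1 = l.1 then (1 : ℝ) else 0 := by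
    intro k l
    simp only [Matrix.mul_apply, transpose_apply, hZs, ite_mul, one_mul, zero_mul]
    by_cases h : k.1 = l.1
    · simp [h, Finset.sum_ite_eq]
    · have h' : ¬ l.1 = k.1 := fun h' => h h'.symm
      simp [Finset.sum_ite_eq, h, h']
  have hVentry : ∀ k l : (d : Fin D) × Fin (nds d),
      Vs k l = σu2 * (if k.1 = l.1 then 1 else 0) + σe2 * (if k = l then 1 else 0) := by
    intro k l
    rw [hVs]
    simp [Matrix.add_apply, Matrix.smul_apply, hZZ, Matrix.one_apply, smul_eq_mul]
  -- Part 1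
  have part1 : adi ⬝ᵥ Vs.mulVec adi = σu2 + σe2 := by
    rw [hadi, mulVec_single, single_dotProduct]
    simp [hVentry]
  refine ⟨part1, ?_⟩
  -- symmetry of Vs
  have hVsymm : Vsᵀ = Vs := by
    ext k l
    rw [transpose_apply, hVentry, hVentry]
    have e1 : (l.1 = k.1) = (k.1 = l.1) := propext ⟨Eq.symm, Eq.symm⟩
    have e2 : (l = k) = (k = l) := propext ⟨Eq.symm, Eq.symm⟩
    simp only [e1, e2]
  -- positive definiteness and invertibility of Vs
  have hVpd : Vs.PosDef := by
    refine posDef_iff_dotProduct_mulVec.mpr ⟨?_, ?_⟩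
    · have : Vsᴴ = Vsᵀ := by ext k l; simp [conjTranspose_apply]
      exact this.trans hVsymm
    · intro x hx
      have hsx : star x = x := by simp
      rw [hsx, hVs, add_mulVec, smul_mulVec, smul_mulVec, one_mulVec,
        dotProduct_add, dotProduct_smul, dotProduct_smul]
      have h1 : x ⬝ᵥ (Zs * Zsᵀ) *ᵥ x = (Zsᵀ *ᵥ x) ⬝ᵥ (Zsᵀ *ᵥ x) := by
        rw [← mulVec_mulVec, helper_dot_mv]
      have h2 : (0:ℝ) ≤ (Zsᵀ *ᵥ x) ⬝ᵥ (Zsᵀ *ᵥ x) :=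
        Finset.sum_nonneg fun _ _ => mul_self_nonneg _
      have h3 : (0:ℝ) < x ⬝ᵥ x := by
        have := dotProduct_self_star_pos_iff (v := x)
        rw [hsx] at this
        exact this.mpr hx
      have := mul_nonneg hσu (h1 ▸ h2)
      simp only [smul_eq_mul]
      nlinarith [mul_pos hσe h3]
  have hdet : IsUnit Vs.det := isUnit_iff_ne_zero.mpr hVpd.det_pos.ne'
  have hVinv : Vs⁻¹ * Vs = 1 := nonsing_inv_mul _ hdet
  have hVinvT : Vs⁻¹ᵀ = Vs⁻¹ := by rw [transpose_nonsing_inv, hVsymm]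
  have hQT : Qsᵀ = Qs := by
    rw [hQs, transpose_nonsing_inv]
    congr 1
    rw [transpose_mul, transpose_mul, transpose_transpose, hVinvT, Matrix.mul_assoc]
  -- the area indicator vector u
  set u : (d : Fin D) × Fin (nds d) → ℝ := Zs *ᵥ Pi.single d 1 with hudef
  have hu : ∀ k, u k = if k.1 = d then 1 else 0 := by
    intro k
    rw [hudef, mulVec_single]
    simp [hZs]
  -- Vs u = c • u
  set c : ℝ := σu2 * (nds d : ℝ) + σe2 with hc
  have hcpos : 0 < c := by positivity
  have hVu : Vs *ᵥ u = c • u := by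
    funext k
    rw [Matrix.mulVec, dotProduct]
    simp only [hVentry, hu]
    rw [Finset.sum_congr rfl (fun l _ => by ring_nf :
      ∀ l ∈ Finset.univ, (σu2 * (if k.1 = l.1 then (1:ℝ) else 0) + σe2 * (if k = l then 1 else 0)) * (if l.1 = d then 1 else 0)
        = σu2 * ((if k.1 = l.1 then (1:ℝ) else 0) * (if l.1 = d then 1 else 0))
          + σe2 * ((if k = l then (1:ℝ) else 0) * (if l.1 = d then 1 else 0)))]
    rw [Finset.sum_add_distrib, ← Finset.mul_sum, ← Finset.mul_sum]
    have key1 : ∑ l : (d : Fin D) × Fin (nds d),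
        (if k.1 = l.1 then (1:ℝ) else 0) * (if l.1 = d then 1 else 0)
        = if k.1 = d then (nds d : ℝ) else 0 := by
      rw [← Finset.univ_sigma_univ, Finset.sum_sigma]
      by_cases h : k.1 = d
      · subst h
        simp [Finset.sum_ite_eq']
      · simp only [Finset.sum_const, nsmul_eq_mul]
        rw [Finset.sum_eq_zero, if_neg h]
        intro a _
        by_cases h1 : k.1 = a <;> by_cases h2 : a = d <;>
          simp_all
    have key2 : ∑ l : (d : Fin D) × Fin (nds d),
        (if k = l then (1:ℝ) else 0) * (if l.1 = d then 1 else 0)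
        = if k.1 = d then 1 else 0 := by
      rw [Finset.sum_eq_single k]
      · simp
      · intro l _ hl; simp [Ne.symm hl]
      · simp
    rw [key1, key2, Pi.smul_apply, smul_eq_mul, hu k, hc]
    by_cases h : k.1 = d
    · simp only [if_pos h]; ring
    · simp only [if_neg h]; ring
  have hViu : Vs⁻¹ *ᵥ u = c⁻¹ • u := by
    have h0 : Vs⁻¹ *ᵥ (Vs *ᵥ u) = u := by
      rw [mulVec_mulVec, hVinv, one_mulVec]
    rw [hVu, mulVec_smul] at h0
    calc Vs⁻¹ *ᵥ u = c⁻¹ • (c • (Vs⁻¹ *ᵥ u)) := by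
          rw [smul_smul, inv_mul_cancel₀ hcpos.ne', one_smul]
      _ = c⁻¹ • u := by rw [h0]
  -- Xsᵀ u = n_d • xbar
  have hXu : Xsᵀ *ᵥ u = (nds d : ℝ) • xbar := by
    funext j
    rw [Matrix.mulVec, dotProduct]
    simp only [transpose_apply, hu]
    have hsum : ∑ l : (d' : Fin D) × Fin (nds d'), Xs l j * (if l.1 = d then (1:ℝ) else 0)
        = ∑ b : Fin (nds d), Xs ⟨d, b⟩ j := by
      rw [← Finset.univ_sigma_univ, Finset.sum_sigma]
      rw [Finset.sum_eq_single d]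
      · simp
      · intro a _ ha; simp [ha]
      · simp
    rw [hsum, hxbar, Pi.smul_apply, Pi.smul_apply, smul_eq_mul, smul_eq_mul, ← mul_assoc,
      mul_inv_cancel₀ hn.ne', one_mul, Finset.sum_apply]
  -- Xsᵀ adi = Xs ⟨d,i⟩
  have hXa : Xsᵀ *ᵥ adi = Xs ⟨d, i⟩ := by
    rw [hadi, mulVec_single]
    funext j
    show Xsᵀ j ⟨d, i⟩ * 1 = Xs ⟨d, i⟩ j
    rw [transpose_apply, mul_one]
  have hua : u ⬝ᵥ adi = 1 := by
    rw [hadi, dotProduct_single, hu ⟨d, i⟩]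
    simp
  -- main computation
  rw [hbdj, add_dotProduct, smul_dotProduct]
  -- term 1
  have hM1 : (Vs⁻¹ * Xs * Qs)ᵀ * Vs = Qs * Xsᵀ := by
    rw [transpose_mul, transpose_mul, hVinvT, hQT, Matrix.mul_assoc, Matrix.mul_assoc,
      hVinv, Matrix.mul_one]
  have hT1 : ((Vs⁻¹ * Xs * Qs) *ᵥ xdj) ⬝ᵥ (Vs *ᵥ adi)
      = xdj ⬝ᵥ Qs *ᵥ (Xs ⟨d, i⟩) := by
    rw [helper_mv_dot_mv, hM1, ← mulVec_mulVec, hXa]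
  -- term 2
  have hPT : Psᵀ = Ps := by
    rw [hPs]
    simp only [transpose_sub, transpose_mul, transpose_transpose, hVinvT, hQT,
      Matrix.mul_assoc]
  have hPV : Ps * Vs = 1 - Vs⁻¹ * (Xs * (Qs * Xsᵀ)) := by
    rw [hPs, sub_mul, hVinv]
    simp only [Matrix.mul_assoc, hVinv, Matrix.mul_one]
  have hT2 : (Ps *ᵥ u) ⬝ᵥ (Vs *ᵥ adi)
      = 1 - c⁻¹ * ((nds d : ℝ) * (xbar ⬝ᵥ Qs *ᵥ (Xs ⟨d, i⟩))) := by
    rw [helper_mv_dot_mv, hPT, hPV, sub_mulVec, one_mulVec, dotProduct_sub, hua]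
    congr 1
    rw [← mulVec_mulVec, helper_dot_mv, hVinvT, hViu, smul_dotProduct]
    rw [← mulVec_mulVec, helper_dot_mv Xs, ← mulVec_mulVec, hXa, hXu, smul_dotProduct]
    simp [mul_assoc]
  rw [hT1, hT2]
  -- final algebra
  rw [sub_dotProduct, smul_dotProduct]
  have hden : σu2 + σe2 / (nds d : ℝ) ≠ 0 := by positivity
  rw [hγ]
  set r := xbar ⬝ᵥ Qs *ᵥ (Xs ⟨d, i⟩)
  set s := xdj ⬝ᵥ Qs *ᵥ (Xs ⟨d, i⟩)
  field_simp
  rw [hc]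
  simp only [smul_eq_mul]
  field_simp
  ring
end
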